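/- arXiv:alg-geom/9611006 — 3 statements merged into one kernel-verified Lean document; each statement's English description precedes it below -/
import Mathlib

section
/- Let $I_n \subset \mathbb{Z}[X_1,\ldots,X_n]$ be the ideal generated by the elementary symmetric polynomials $e_1,\ldots,e_n$. If $w \in S^{(n)} \setminus S_n$ (i.e. $w(n+1) < w(n+2) < \cdots$ but $w \notin S_n$), then the Schubert polynomial $\mathfrak{S}_w$ lies in $I_n$. -/
open MvPolynomial Finset

noncomputable section

/-- The length (number of inversions) of a permutation of `ℕ`. -/
def permLength (w : Equiv.Perm ℕ) : ℕ :=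
  Nat.card {p : ℕ × ℕ // p.1 < p.2 ∧ w p.2 < w p.1}

/-- `w` belongs to `S_n` (0-indexed): it fixes every `i ≥ n`. -/
def memSn (n : ℕ) (w : Equiv.Perm ℕ) : Prop :=
  ∀ i, n ≤ i → w i = i

/-- `w` belongs to `S_∞`: it fixes all but finitely many points. -/
def finSupp (w : Equiv.Perm ℕ) : Prop :=
  ∃ n, memSn n w

/-- The longest element of `S_n`: `i ↦ n - 1 - i` on `{0, …, n-1}`, identity elsewhere. -/
def w0 (n : ℕ) : Equiv.Perm ℕ :=
  Function.Involutive.toPerm (fun i => if i < n then n - 1 - i else i)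
    (by intro i; dsimp only; split_ifs <;> omega)

/-- The staircase monomial `X_0^{n-1} X_1^{n-2} ⋯ X_{n-2}`. -/
def staircase (n : ℕ) : MvPolynomial ℕ ℤ :=
  ∏ i ∈ Finset.range n, X i ^ (n - 1 - i)

/-- Divided difference operators and Schubert polynomials, packaged with their defining
properties: `D i` is the divided difference `∂_i f = (f - s_i f)/(X_i - X_{i+1})`,
`Dw` is `∂_w` (defined through reduced words), and the Schubert polynomial is
`𝔖_w = ∂_{w⁻¹ w₀} (X_0^{n-1} X_1^{n-2} ⋯)` for `w ∈ S_n` (compatibly with the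
inclusions `S_n ⊆ S_{n+1}`). -/
structure SchubertData where
  D : ℕ → MvPolynomial ℕ ℤ → MvPolynomial ℕ ℤ
  hD : ∀ i f, (X i - X (i + 1)) * D i f = f - rename (⇑(Equiv.swap i (i + 1))) f
  Dw : Equiv.Perm ℕ → MvPolynomial ℕ ℤ → MvPolynomial ℕ ℤ
  Dw_one : Dw 1 = id
  Dw_step : ∀ w i, permLength (w * Equiv.swap i (i + 1)) = permLength w + 1 →
    Dw (w * Equiv.swap i (i + 1)) = Dw w ∘ D i
  S : Equiv.Perm ℕ → MvPolynomial ℕ ℤ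
  hS : ∀ n w, memSn n w → S w = Dw (w⁻¹ * w0 n) (staircase n)

/-- The `k`-th elementary symmetric polynomial in the variables `X_0, …, X_{n-1}`. -/
def esymmN (n k : ℕ) : MvPolynomial ℕ ℤ :=
  ∑ s ∈ Finset.powersetCard k (Finset.range n), ∏ i ∈ s, X i

/-- The ideal `I_n = ⟨e_1, …, e_n⟩` of `ℤ[X_0, X_1, …]`. -/
def In (n : ℕ) : Ideal (MvPolynomial ℕ ℤ) :=
  Ideal.span {p | ∃ k, 1 ≤ k ∧ k ≤ n ∧ p = esymmN n k}

/-- The embedding of `S_n = Perm (Fin n)` into `Perm ℕ`. -/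
def embedPerm (n : ℕ) (u : Equiv.Perm (Fin n)) : Equiv.Perm ℕ :=
  u.extendDomain Fin.equivSubtype

namespace SchubertAux

lemma perm_apply_inv_self (f : Equiv.Perm ℕ) (x : ℕ) : f (f⁻¹ x) = x := f.apply_symm_apply x

lemma perm_inv_apply_self (f : Equiv.Perm ℕ) (x : ℕ) : f⁻¹ (f x) = x := f.symm_apply_apply x

abbrev sw (i : ℕ) : Equiv.Perm ℕ := Equiv.swap i (i + 1)

lemma sw_apply (i x : ℕ) : sw i x = if x = i then i + 1 else if x = i + 1 then i else x :=
  Equiv.swap_apply_def i (i + 1) x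

lemma sw_sw (i x : ℕ) : sw i (sw i x) = x := Equiv.swap_apply_self _ _ _

lemma sw_mul_self (i : ℕ) : sw i * sw i = 1 := Equiv.swap_mul_self _ _

lemma memSn_apply_lt {m : ℕ} {w : Equiv.Perm ℕ} (hw : memSn m w) {p : ℕ} (hp : p < m) :
    w p < m := by
  by_contra h
  push_neg at h
  have h2 : w (w p) = w p := hw _ h
  have h3 := w.injective h2
  omega

lemma memSn_one (m : ℕ) : memSn m 1 := fun _ _ => rfl

lemma memSn_mul {m : ℕ} {u v : Equiv.Perm ℕ} (hu : memSn m u) (hv : memSn m v) :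
    memSn m (u * v) := fun i hi => by
  rw [Equiv.Perm.mul_apply, hv i hi, hu i hi]

lemma memSn_inv {m : ℕ} {u : Equiv.Perm ℕ} (hu : memSn m u) : memSn m u⁻¹ := fun i hi => by
  conv_lhs => rw [← hu i hi]
  simp

lemma memSn_mono {m m' : ℕ} {u : Equiv.Perm ℕ} (h : m ≤ m') (hu : memSn m u) : memSn m' u :=
  fun i hi => hu i (le_trans h hi)

lemma memSn_sw {m i : ℕ} (h : i + 1 < m) : memSn m (sw i) := fun j hj =>
  Equiv.swap_apply_of_ne_of_ne (by omega) (by omega)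

lemma w0_apply (m x : ℕ) : w0 m x = if x < m then m - 1 - x else x := rfl

lemma memSn_w0 (m : ℕ) : memSn m (w0 m) := fun i hi => by
  rw [w0_apply]; split_ifs <;> omega

lemma w0_mul_self (m : ℕ) : w0 m * w0 m = 1 := by
  ext x
  simp only [Equiv.Perm.mul_apply, w0_apply, Equiv.Perm.one_apply]
  split_ifs <;> omega

lemma w0_inv (m : ℕ) : (w0 m)⁻¹ = w0 m := inv_eq_of_mul_eq_one_right (w0_mul_self m)

def invF (m : ℕ) (w : Equiv.Perm ℕ) : Finset (ℕ × ℕ) :=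
  (range m ×ˢ range m).filter (fun p => p.1 < p.2 ∧ w p.2 < w p.1)

lemma mem_invF {m : ℕ} {w : Equiv.Perm ℕ} {p : ℕ × ℕ} :
    p ∈ invF m w ↔ (p.1 < m ∧ p.2 < m) ∧ p.1 < p.2 ∧ w p.2 < w p.1 := by
  simp [invF, mem_filter, mem_product, mem_range]

lemma permLength_eq {m : ℕ} {w : Equiv.Perm ℕ} (hw : memSn m w) :
    permLength w = (invF m w).card := by
  have hset : {p : ℕ × ℕ | p.1 < p.2 ∧ w p.2 < w p.1} = ↑(invF m w) := by
    ext p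
    simp only [Set.mem_setOf_eq, coe_filter, invF, mem_coe, mem_filter, mem_product, mem_range,
      Set.mem_setOf_eq]
    constructor
    · rintro ⟨h1, h2⟩
      have hp1 : p.1 < m := by
        by_contra hge; push_neg at hge
        have e1 : w p.1 = p.1 := hw _ hge
        have e2 : w p.2 = p.2 := hw _ (by omega)
        omega
      have hp2 : p.2 < m := by
        by_contra hge; push_neg at hge
        have e2 : w p.2 = p.2 := hw _ hge
        have hlt : w p.1 < m := memSn_apply_lt hw hp1
        omega
      exact ⟨⟨hp1, hp2⟩, h1, h2⟩
    · rintro ⟨_, h⟩; exact h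
  show Nat.card ↑{p : ℕ × ℕ | p.1 < p.2 ∧ w p.2 < w p.1} = (invF m w).card
  rw [hset, Nat.card_coe_set_eq, Set.ncard_coe_finset]

lemma permLength_one : permLength 1 = 0 := by
  rw [permLength_eq (memSn_one 0)]
  simp [invF]

lemma sw_lt_of_lt {i p q : ℕ} (hpq : p < q) (hne : ¬(p = i ∧ q = i + 1)) :
    sw i p < sw i q := by
  rw [sw_apply, sw_apply]
  split_ifs <;> omega

lemma invF_swap_card {m i : ℕ} {w : Equiv.Perm ℕ} (hw : memSn m w) (him : i + 1 < m)
    (hasc : w i < w (i + 1)) :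
    (invF m (w * sw i)).card = (invF m w).card + 1 := by
  set v := w * sw i with hv
  have hvap : ∀ x, v x = w (sw i x) := fun x => rfl
  have hmem : (i, i + 1) ∈ invF m v := by
    rw [mem_invF]
    refine ⟨⟨by omega, him⟩, by omega, ?_⟩
    show v (i + 1) < v i
    rw [hvap, hvap, Equiv.swap_apply_left, Equiv.swap_apply_right]
    exact hasc
  have hbij : (invF m w).card = ((invF m v).erase (i, i + 1)).card := by
    apply Finset.card_bij' (fun p _ => (sw i p.1, sw i p.2)) (fun p _ => (sw i p.1, sw i p.2))
    · intro p hp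
      rw [mem_invF] at hp
      obtain ⟨⟨h1, h2⟩, h3, h4⟩ := hp
      have hne : ¬(p.1 = i ∧ p.2 = i + 1) := by
        rintro ⟨e1, e2⟩; rw [e1, e2] at h4; omega
      rw [mem_erase, mem_invF]
      dsimp only
      constructor
      · intro hcon
        have e1 : sw i p.1 = i := congrArg Prod.fst hcon
        have e2 : sw i p.2 = i + 1 := congrArg Prod.snd hcon
        have f1 : p.1 = i + 1 := by
          have h := congrArg (sw i) e1
          rw [sw_sw, Equiv.swap_apply_left] at h; exact h
        have f2 : p.2 = i := by
          have h := congrArg (sw i) e2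
          rw [sw_sw, Equiv.swap_apply_right] at h; exact h
        omega
      · refine ⟨⟨?_, ?_⟩, sw_lt_of_lt h3 hne, ?_⟩
        · rw [sw_apply]; split_ifs <;> omega
        · rw [sw_apply]; split_ifs <;> omega
        · show v (sw i p.2) < v (sw i p.1)
          rw [hvap, hvap, sw_sw, sw_sw]; exact h4
    · intro p hp
      rw [mem_erase, mem_invF] at hp
      obtain ⟨hne0, ⟨h1, h2⟩, h3, h4⟩ := hp
      have hne : ¬(p.1 = i ∧ p.2 = i + 1) := by
        rintro ⟨e1, e2⟩; apply hne0; rw [Prod.ext_iff]; exact ⟨e1, e2⟩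
      rw [mem_invF]
      dsimp only
      refine ⟨⟨?_, ?_⟩, sw_lt_of_lt h3 hne, ?_⟩
      · rw [sw_apply]; split_ifs <;> omega
      · rw [sw_apply]; split_ifs <;> omega
      · have h5 := h4
        rw [hvap, hvap] at h5
        exact h5
    · intro p _; simp [sw_sw]
    · intro p _; simp [sw_sw]
  have hcard := Finset.card_erase_of_mem hmem
  have hpos : 0 < (invF m v).card := Finset.card_pos.mpr ⟨_, hmem⟩
  omega

lemma permLength_mul_sw_asc {m i : ℕ} {w : Equiv.Perm ℕ} (hw : memSn m w) (him : i + 1 < m)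
    (hasc : w i < w (i + 1)) :
    permLength (w * sw i) = permLength w + 1 := by
  rw [permLength_eq (memSn_mul hw (memSn_sw him)), permLength_eq hw,
    invF_swap_card hw him hasc]

lemma permLength_mul_sw_desc {m i : ℕ} {w : Equiv.Perm ℕ} (hw : memSn m w) (him : i + 1 < m)
    (hdesc : w (i + 1) < w i) :
    permLength w = permLength (w * sw i) + 1 := by
  set w' := w * sw i with hw'
  have hmm : w' * sw i = w := by rw [hw', mul_assoc, sw_mul_self, mul_one]
  have hasc : w' i < w' (i + 1) := by
    show w (sw i i) < w (sw i (i + 1))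
    rw [Equiv.swap_apply_left, Equiv.swap_apply_right]
    exact hdesc
  have h := permLength_mul_sw_asc (memSn_mul hw (memSn_sw him)) him hasc
  rw [hmm] at h
  exact h

lemma permLength_inv {m : ℕ} {w : Equiv.Perm ℕ} (hw : memSn m w) :
    permLength w⁻¹ = permLength w := by
  rw [permLength_eq (memSn_inv hw), permLength_eq hw]
  apply Finset.card_bij' (fun p _ => (w⁻¹ p.2, w⁻¹ p.1)) (fun p _ => (w p.2, w p.1))
  · intro p hp
    rw [mem_invF] at hp ⊢
    obtain ⟨⟨h1, h2⟩, h3, h4⟩ := hp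
    dsimp only
    refine ⟨⟨memSn_apply_lt (memSn_inv hw) h2, memSn_apply_lt (memSn_inv hw) h1⟩, h4, ?_⟩
    simp only [perm_apply_inv_self]
    exact h3
  · intro p hp
    rw [mem_invF] at hp ⊢
    obtain ⟨⟨h1, h2⟩, h3, h4⟩ := hp
    dsimp only
    refine ⟨⟨memSn_apply_lt hw h2, memSn_apply_lt hw h1⟩, h4, ?_⟩
    simp only [perm_inv_apply_self]
    exact h3
  · intro p _; simp
  · intro p _; simp

lemma permLength_mul_le {m : ℕ} {u v : Equiv.Perm ℕ} (hu : memSn m u) (hv : memSn m v) :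
    permLength (u * v) ≤ permLength u + permLength v := by
  rw [permLength_eq (memSn_mul hu hv), permLength_eq hu, permLength_eq hv]
  classical
  have hsplit := Finset.card_filter_add_card_filter_not
    (s := invF m (u * v)) (p := fun p => v p.2 < v p.1)
  have h1 : ((invF m (u * v)).filter (fun p => v p.2 < v p.1)).card ≤ (invF m v).card := by
    apply Finset.card_le_card
    intro p hp
    rw [mem_filter, mem_invF] at hp
    rw [mem_invF]
    exact ⟨hp.1.1, hp.1.2.1, hp.2⟩
  have h2 : ((invF m (u * v)).filter (fun p => ¬ v p.2 < v p.1)).card ≤ (invF m u).card := by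
    apply Finset.card_le_card_of_injOn (fun p => (v p.1, v p.2))
    · intro p hp
      rw [Finset.mem_coe, mem_filter, mem_invF] at hp
      obtain ⟨⟨⟨g1, g2⟩, g3, g4⟩, g5⟩ := hp
      rw [Finset.mem_coe, mem_invF]
      dsimp only
      refine ⟨⟨memSn_apply_lt hv g1, memSn_apply_lt hv g2⟩, ?_, g4⟩
      have hne : v p.1 ≠ v p.2 := by
        intro h
        have h2 := v.injective h
        omega
      omega
    · intro p _ q _ h
      have e1 : v p.1 = v q.1 := congrArg Prod.fst h
      have e2 : v p.2 = v q.2 := congrArg Prod.snd h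
      have := v.injective e1
      have := v.injective e2
      exact Prod.ext ‹p.1 = q.1› ‹p.2 = q.2›
  omega

lemma exists_desc {w : Equiv.Perm ℕ} (hne : w ≠ 1) : ∃ i, w (i + 1) < w i := by
  by_contra h
  push_neg at h
  have hmono : StrictMono ⇑w := strictMono_nat_of_lt_succ (fun n => by
    have h1 := h n
    have h2 : w n ≠ w (n + 1) := fun he => by
      have := w.injective he; omega
    omega)
  have hmono' : StrictMono ⇑w⁻¹ := fun a b hab => by
    rcases lt_trichotomy (w⁻¹ a) (w⁻¹ b) with h' | h' | h'
    · exact h'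
    · exfalso; have := congrArg w h'; simp at this; omega
    · exfalso
      have := hmono h'
      simp only [perm_apply_inv_self] at this
      omega
  apply hne
  apply Equiv.ext
  intro x
  have h1 : x ≤ w x := hmono.le_apply
  have h2 : w x ≤ x := by
    have := hmono'.le_apply (x := w x)
    simpa using this
  simp only [Equiv.Perm.one_apply]
  omega

lemma desc_lt {m : ℕ} {w : Equiv.Perm ℕ} (hw : memSn m w) {i : ℕ} (h : w (i + 1) < w i) :
    i + 1 < m := by
  by_contra hge
  push_neg at hge
  rcases Nat.lt_or_ge i m with hi | hi
  · have e : w (i + 1) = i + 1 := hw _ hge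
    have : w i < m := memSn_apply_lt hw hi
    omega
  · have e1 : w i = i := hw _ hi
    have e2 : w (i + 1) = i + 1 := hw _ (by omega)
    omega

lemma permLength_sw (i : ℕ) : permLength (sw i) = 1 := by
  have h0 : (1 : Equiv.Perm ℕ) i < (1 : Equiv.Perm ℕ) (i + 1) := by simp
  have h := permLength_mul_sw_asc (memSn_one (i + 2)) (show i + 1 < i + 2 by omega) h0
  rw [one_mul, permLength_one] at h
  exact h

end SchubertAux

namespace SchubertAux

lemma Dw_mul_aux (SD : SchubertData) {m : ℕ} :
    ∀ K (u v : Equiv.Perm ℕ), memSn m u → memSn m v → permLength v ≤ K →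
      permLength (u * v) = permLength u + permLength v →
      SD.Dw (u * v) = SD.Dw u ∘ SD.Dw v := by
  intro K
  induction K with
  | zero =>
    intro u v hu hv hK hlen
    have hv1 : v = 1 := by
      by_contra hne
      obtain ⟨i, hi⟩ := exists_desc hne
      have him : i + 1 < m := desc_lt hv hi
      have hmem : (i, i + 1) ∈ invF m v := by
        rw [mem_invF]
        exact ⟨⟨by omega, him⟩, by omega, hi⟩
      have hpos : 0 < (invF m v).card := Finset.card_pos.mpr ⟨_, hmem⟩
      rw [permLength_eq hv] at hK
      omega
    subst hv1
    rw [mul_one, SD.Dw_one]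
    rfl
  | succ K IH =>
    intro u v hu hv hK hlen
    by_cases hne : v = 1
    · subst hne
      rw [mul_one, SD.Dw_one]
      rfl
    · obtain ⟨i, hi⟩ := exists_desc hne
      have him : i + 1 < m := desc_lt hv hi
      set v' := v * sw i with hv'def
      have hv' : memSn m v' := memSn_mul hv (memSn_sw him)
      have hvv : v' * sw i = v := by rw [hv'def, mul_assoc, sw_mul_self, mul_one]
      have hlv : permLength v = permLength v' + 1 := permLength_mul_sw_desc hv him hi
      have huv' : memSn m (u * v') := memSn_mul hu hv'
      have hasc : (u * v') i < (u * v') (i + 1) := by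
        by_contra hcon
        push_neg at hcon
        have hneq : (u * v') (i + 1) ≠ (u * v') i := by
          intro h
          have := (u * v').injective h
          omega
        have hd : (u * v') (i + 1) < (u * v') i := lt_of_le_of_ne hcon hneq
        have hdl := permLength_mul_sw_desc huv' him hd
        have he : u * v' * sw i = u * v := by rw [mul_assoc, hvv]
        have hle := permLength_mul_le hu hv'
        rw [he, hlen, hlv] at hdl
        omega
      have hstep := permLength_mul_sw_asc huv' him hasc
      have he : u * v' * sw i = u * v := by rw [mul_assoc, hvv]
      have hlen' : permLength (u * v') = permLength u + permLength v' := by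
        have hle := permLength_mul_le hu hv'
        have hstep2 := hstep
        rw [he, hlen, hlv] at hstep2
        omega
      have hIH := IH u v' hu hv' (by omega) hlen'
      have h1 : SD.Dw (u * v) = SD.Dw (u * v') ∘ SD.D i := by
        rw [← he]
        exact SD.Dw_step (u * v') i hstep
      have h2 : SD.Dw v = SD.Dw v' ∘ SD.D i := by
        rw [← hvv]
        apply SD.Dw_step v' i
        rw [hvv]
        exact hlv
      rw [h1, hIH, h2]
      rfl

lemma Dw_mul (SD : SchubertData) {m : ℕ} {u v : Equiv.Perm ℕ} (hu : memSn m u)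
    (hv : memSn m v) (hlen : permLength (u * v) = permLength u + permLength v) :
    SD.Dw (u * v) = SD.Dw u ∘ SD.Dw v :=
  Dw_mul_aux SD (permLength v) u v hu hv le_rfl hlen

lemma Dw_sw (SD : SchubertData) (i : ℕ) : SD.Dw (sw i) = SD.D i := by
  have h := SD.Dw_step 1 i (by rw [one_mul, permLength_sw, permLength_one])
  rw [one_mul] at h
  rw [h, SD.Dw_one]
  rfl

lemma S_eq_D (SD : SchubertData) {m i : ℕ} {w : Equiv.Perm ℕ} (hw : memSn m w)
    (him : i + 1 < m) (hasc : w i < w (i + 1)) :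
    SD.S w = SD.D i (SD.S (w * sw i)) := by
  set w' := w * sw i with hw'def
  have hw' : memSn m w' := memSn_mul hw (memSn_sw him)
  rw [SD.hS m w hw, SD.hS m w' hw']
  set v := w'⁻¹ * w0 m with hvdef
  have hmemv : memSn m v := memSn_mul (memSn_inv hw') (memSn_w0 m)
  have hsw_v : sw i * v = w⁻¹ * w0 m := by
    rw [hvdef, hw'def, mul_inv_rev, Equiv.swap_inv, ← mul_assoc, ← mul_assoc, sw_mul_self,
      one_mul]
  have hw'i : w' i = w (i + 1) := by
    show w (sw i i) = w (i + 1)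
    rw [Equiv.swap_apply_left]
  have hw'i1 : w' (i + 1) = w i := by
    show w (sw i (i + 1)) = w i
    rw [Equiv.swap_apply_right]
  have hvinv : v⁻¹ = w0 m * w' := by
    rw [hvdef, mul_inv_rev, inv_inv, w0_inv]
  have hascinv : v⁻¹ i < v⁻¹ (i + 1) := by
    rw [hvinv]
    show w0 m (w' i) < w0 m (w' (i + 1))
    rw [hw'i, hw'i1, w0_apply, w0_apply]
    have l1 : w i < m := memSn_apply_lt hw (by omega)
    have l2 : w (i + 1) < m := memSn_apply_lt hw him
    split_ifs <;> omega
  have hlv : permLength (v⁻¹ * sw i) = permLength v⁻¹ + 1 :=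
    permLength_mul_sw_asc (memSn_inv hmemv) him hascinv
  have hlen : permLength (sw i * v) = permLength (sw i) + permLength v := by
    have e : (sw i * v)⁻¹ = v⁻¹ * sw i := by
      rw [mul_inv_rev, Equiv.swap_inv]
    have e2 : permLength (sw i * v) = permLength (v⁻¹ * sw i) := by
      rw [← e, permLength_inv (memSn_mul (memSn_sw him) hmemv)]
    rw [e2, hlv, permLength_inv hmemv, permLength_sw]
    omega
  have hmul := Dw_mul SD (memSn_sw him) hmemv hlen
  rw [← hsw_v, hmul, Dw_sw]
  rfl

end SchubertAux

namespace SchubertAux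

lemma X_sub_ne (i : ℕ) : (X i : MvPolynomial ℕ ℤ) - X (i + 1) ≠ 0 := by
  intro h
  have h2 : (X i : MvPolynomial ℕ ℤ) = X (i + 1) := sub_eq_zero.mp h
  exact absurd (MvPolynomial.X_injective h2) (by omega)

lemma D_cancel {i : ℕ} {a b : MvPolynomial ℕ ℤ}
    (h : (X i - X (i + 1)) * a = (X i - X (i + 1)) * b) : a = b :=
  mul_left_cancel₀ (X_sub_ne i) h

lemma ren_ren (i : ℕ) (f : MvPolynomial ℕ ℤ) :
    rename (⇑(Equiv.swap i (i + 1))) (rename (⇑(Equiv.swap i (i + 1))) f) = f := by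
  rw [rename_rename]
  have h : (⇑(Equiv.swap i (i + 1)) ∘ ⇑(Equiv.swap i (i + 1))) = id := by
    funext x; exact Equiv.swap_apply_self _ _ x
  rw [h, rename_id, AlgHom.id_apply]

lemma D_add (SD : SchubertData) (i : ℕ) (f g : MvPolynomial ℕ ℤ) :
    SD.D i (f + g) = SD.D i f + SD.D i g := by
  apply D_cancel (i := i)
  rw [SD.hD, mul_add, SD.hD, SD.hD, map_add]
  ring

lemma D_zero (SD : SchubertData) (i : ℕ) : SD.D i 0 = 0 := by
  have h := D_add SD i 0 0
  simp only [add_zero] at h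
  exact left_eq_add.mp h

lemma D_symm_zero (SD : SchubertData) {i : ℕ} {f : MvPolynomial ℕ ℤ}
    (h : rename (⇑(Equiv.swap i (i + 1))) f = f) : SD.D i f = 0 := by
  apply D_cancel (i := i)
  rw [SD.hD, h, mul_zero, sub_self]

lemma D_mul (SD : SchubertData) (i : ℕ) (f g : MvPolynomial ℕ ℤ) :
    SD.D i (f * g) = SD.D i f * g + rename (⇑(Equiv.swap i (i + 1))) f * SD.D i g := by
  apply D_cancel (i := i)
  rw [SD.hD, map_mul]
  linear_combination (-g) * SD.hD i f - rename (⇑(Equiv.swap i (i + 1))) f * SD.hD i g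

lemma sw_mem_range {n i x : ℕ} (h : i + 1 < n) (hx : x < n) : sw i x < n := by
  rw [sw_apply]; split_ifs <;> omega

lemma esymmN_invariant {n k i : ℕ} (h : i + 1 < n) :
    rename (⇑(Equiv.swap i (i + 1))) (esymmN n k) = esymmN n k := by
  unfold esymmN
  rw [map_sum]
  have hterm : ∀ s ∈ Finset.powersetCard k (Finset.range n),
      rename (⇑(Equiv.swap i (i + 1))) (∏ j ∈ s, (X j : MvPolynomial ℕ ℤ))
        = ∏ j ∈ s.image (sw i), X j := by
    intro s _
    rw [map_prod]
    rw [Finset.prod_image (fun x _ y _ hxy => (Equiv.injective _) hxy)]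
    exact Finset.prod_congr rfl (fun j _ => rename_X _ j)
  rw [Finset.sum_congr rfl hterm]
  apply Finset.sum_nbij' (fun s => s.image (sw i)) (fun s => s.image (sw i))
  · intro s hs
    rw [Finset.mem_powersetCard] at hs ⊢
    constructor
    · intro x hx
      rw [Finset.mem_image] at hx
      obtain ⟨y, hy, rfl⟩ := hx
      exact Finset.mem_range.mpr (sw_mem_range h (Finset.mem_range.mp (hs.1 hy)))
    · rw [Finset.card_image_of_injective _ (Equiv.injective _)]
      exact hs.2
  · intro s hs
    rw [Finset.mem_powersetCard] at hs ⊢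
    constructor
    · intro x hx
      rw [Finset.mem_image] at hx
      obtain ⟨y, hy, rfl⟩ := hx
      exact Finset.mem_range.mpr (sw_mem_range h (Finset.mem_range.mp (hs.1 hy)))
    · rw [Finset.card_image_of_injective _ (Equiv.injective _)]
      exact hs.2
  · intro s _
    rw [Finset.image_image]
    have : (sw i ∘ sw i) = id := by funext x; exact sw_sw i x
    rw [this, Finset.image_id]
  · intro s _
    rw [Finset.image_image]
    have : (sw i ∘ sw i) = id := by funext x; exact sw_sw i x
    rw [this, Finset.image_id]
  · intro s _
    rfl

lemma esymmN_mem_In {n k : ℕ} (h1 : 1 ≤ k) (h2 : k ≤ n) : esymmN n k ∈ In n :=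
  Ideal.subset_span ⟨k, h1, h2, rfl⟩

lemma D_mem_In (SD : SchubertData) {n i : ℕ} (hin : i + 1 < n) {x : MvPolynomial ℕ ℤ}
    (hx : x ∈ In n) : SD.D i x ∈ In n := by
  have key : x ∈ In n ∧ SD.D i x ∈ In n := by
    refine Submodule.span_induction ?_ ?_ ?_ ?_ hx
    · rintro p ⟨k, hk1, hk2, rfl⟩
      refine ⟨esymmN_mem_In hk1 hk2, ?_⟩
      rw [D_symm_zero SD (esymmN_invariant hin)]
      exact Ideal.zero_mem _
    · exact ⟨Ideal.zero_mem _, by rw [D_zero]; exact Ideal.zero_mem _⟩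
    · rintro a b _ _ ⟨ha1, ha2⟩ ⟨hb1, hb2⟩
      exact ⟨Ideal.add_mem _ ha1 hb1, by rw [D_add]; exact Ideal.add_mem _ ha2 hb2⟩
    · rintro a b _ ⟨hb1, hb2⟩
      rw [smul_eq_mul]
      refine ⟨Ideal.mul_mem_left _ _ hb1, ?_⟩
      rw [D_mul]
      exact Ideal.add_mem _ (Ideal.mul_mem_left _ _ hb1) (Ideal.mul_mem_left _ _ hb2)
  exact key.2

lemma esymmN_zero_eq (n : ℕ) : esymmN n 0 = 1 := by
  unfold esymmN
  rw [Finset.powersetCard_zero, Finset.sum_singleton, Finset.prod_empty]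

lemma esymmN_of_gt {n k : ℕ} (h : n < k) : esymmN n k = 0 := by
  unfold esymmN
  rw [Finset.powersetCard_eq_empty.mpr (by rw [Finset.card_range]; exact h), Finset.sum_empty]

lemma esymmN_succ (N k : ℕ) :
    esymmN (N + 1) (k + 1) = esymmN N (k + 1) + X N * esymmN N k := by
  unfold esymmN
  rw [Finset.range_add_one, Finset.powersetCard_succ_insert (by simp) k]
  rw [Finset.sum_union]
  · congr 1
    rw [Finset.sum_image (fun s hs t ht hst => by
      rw [Finset.mem_coe, Finset.mem_powersetCard] at hs ht
      have hNs : N ∉ s := fun hN => by simpa using hs.1 hN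
      have hNt : N ∉ t := fun hN => by simpa using ht.1 hN
      rw [← Finset.erase_insert hNs, hst, Finset.erase_insert hNt])]
    rw [Finset.mul_sum]
    apply Finset.sum_congr rfl
    intro s hs
    rw [Finset.mem_powersetCard] at hs
    have hNs : N ∉ s := fun hN => by simpa using hs.1 hN
    rw [Finset.prod_insert hNs]
  · rw [Finset.disjoint_left]
    intro s hs hs'
    rw [Finset.mem_powersetCard] at hs
    rw [Finset.mem_image] at hs'
    obtain ⟨t, ht, rfl⟩ := hs'
    have : N ∈ insert N t := Finset.mem_insert_self _ _
    simpa using hs.1 this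

lemma vieta (N : ℕ) : ∏ j ∈ Finset.range N, (X 0 - X j : MvPolynomial ℕ ℤ) =
    ∑ k ∈ Finset.range (N + 1), (-1 : MvPolynomial ℕ ℤ) ^ k * esymmN N k * X 0 ^ (N - k) := by
  induction N with
  | zero => simp [esymmN_zero_eq]
  | succ N IH =>
    have hsplit : ∀ j ∈ Finset.range (N + 1),
        (-1 : MvPolynomial ℕ ℤ) ^ (j + 1) * esymmN (N + 1) (j + 1) * X 0 ^ (N - j)
          = (-1) ^ (j + 1) * esymmN N (j + 1) * X 0 ^ (N - j)
            + (-1) ^ (j + 1) * (X N * esymmN N j) * X 0 ^ (N - j) := by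
      intro j _
      rw [esymmN_succ]
      ring
    have hRHS : ∑ k ∈ Finset.range (N + 2),
        (-1 : MvPolynomial ℕ ℤ) ^ k * esymmN (N + 1) k * X 0 ^ (N + 1 - k)
        = (∑ j ∈ Finset.range (N + 1), (-1) ^ (j + 1) * esymmN N (j + 1) * X 0 ^ (N - j)
           + ∑ j ∈ Finset.range (N + 1), (-1) ^ (j + 1) * (X N * esymmN N j) * X 0 ^ (N - j))
          + X 0 ^ (N + 1) := by
      rw [Finset.sum_range_succ' _ (N + 1)]
      simp only [Nat.succ_sub_succ, pow_zero, one_mul, Nat.sub_zero, esymmN_zero_eq]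
      rw [Finset.sum_congr rfl hsplit, Finset.sum_add_distrib]
    have hfirst : ∑ k ∈ Finset.range (N + 1),
        (-1 : MvPolynomial ℕ ℤ) ^ k * esymmN N k * X 0 ^ (N + 1 - k)
        = ∑ j ∈ Finset.range (N + 1), (-1) ^ (j + 1) * esymmN N (j + 1) * X 0 ^ (N - j)
          + X 0 ^ (N + 1) := by
      rw [Finset.sum_range_succ' _ N]
      simp only [Nat.succ_sub_succ, pow_zero, one_mul, Nat.sub_zero, esymmN_zero_eq]
      conv_rhs => rw [Finset.sum_range_succ]
      rw [esymmN_of_gt (show N < N + 1 by omega)]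
      ring
    have hterm : ∀ k ∈ Finset.range (N + 1),
        ((-1 : MvPolynomial ℕ ℤ) ^ k * esymmN N k * X 0 ^ (N - k)) * (X 0 - X N)
          = (-1) ^ k * esymmN N k * X 0 ^ (N + 1 - k)
            + (-1) ^ (k + 1) * (X N * esymmN N k) * X 0 ^ (N - k) := by
      intro k hk
      rw [Finset.mem_range] at hk
      have he : N + 1 - k = (N - k) + 1 := by omega
      rw [he, pow_succ]
      ring
    rw [Finset.prod_range_succ, IH, hRHS, Finset.sum_mul, Finset.sum_congr rfl hterm,
      Finset.sum_add_distrib, hfirst]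
    ring

lemma X0_pow_mem_In {n : ℕ} (hn : 1 ≤ n) : (X 0 : MvPolynomial ℕ ℤ) ^ n ∈ In n := by
  have hzero : ∏ j ∈ Finset.range n, (X 0 - X j : MvPolynomial ℕ ℤ) = 0 :=
    Finset.prod_eq_zero (i := 0) (Finset.mem_range.mpr (by omega)) (sub_self _)
  have hv := vieta n
  rw [hzero] at hv
  rw [Finset.sum_range_succ' _ n] at hv
  simp only [pow_zero, one_mul, esymmN_zero_eq, Nat.sub_zero] at hv
  have heq : (X 0 : MvPolynomial ℕ ℤ) ^ n
      = -∑ j ∈ Finset.range n, (-1) ^ (j + 1) * esymmN n (j + 1) * X 0 ^ (n - (j + 1)) := by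
    linear_combination -hv
  rw [heq]
  apply neg_mem
  apply Ideal.sum_mem
  intro j hj
  rw [Finset.mem_range] at hj
  exact Ideal.mul_mem_right _ _
    (Ideal.mul_mem_left _ _ (esymmN_mem_In (by omega) (by omega)))

end SchubertAux

namespace SchubertAux

def codeF (m : ℕ) (w : Equiv.Perm ℕ) (j : ℕ) : ℕ :=
  ((Finset.Ioo j m).filter (fun k => w k < w j)).card

lemma codeF_le {m : ℕ} (w : Equiv.Perm ℕ) (j : ℕ) : codeF m w j ≤ m - j - 1 := by
  unfold codeF
  calc ((Finset.Ioo j m).filter (fun k => w k < w j)).card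
      ≤ (Finset.Ioo j m).card := Finset.card_filter_le _ _
    _ = m - j - 1 := Nat.card_Ioo j m

lemma D_monomial (SD : SchubertData) (i b : ℕ) (M : MvPolynomial ℕ ℤ)
    (hM : rename (⇑(Equiv.swap i (i + 1))) M = M) :
    SD.D i (X i ^ (b + 1) * X (i + 1) ^ b * M) = X i ^ b * X (i + 1) ^ b * M := by
  apply D_cancel (i := i)
  rw [SD.hD, map_mul, map_mul, map_pow, map_pow, rename_X, rename_X, hM,
    Equiv.swap_apply_left, Equiv.swap_apply_right]
  ring

lemma rename_sw_prod {i : ℕ} {s : Finset ℕ} (h : ∀ j ∈ s, j ≠ i ∧ j ≠ i + 1) (e : ℕ → ℕ) :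
    rename (⇑(Equiv.swap i (i + 1))) (∏ j ∈ s, (X j : MvPolynomial ℕ ℤ) ^ e j)
      = ∏ j ∈ s, X j ^ e j := by
  rw [map_prod]
  apply Finset.prod_congr rfl
  intro j hj
  rw [map_pow, rename_X, Equiv.swap_apply_of_ne_of_ne (h j hj).1 (h j hj).2]

lemma codeF_sw_at_i {m i : ℕ} {w : Equiv.Perm ℕ} (hasc : w i < w (i + 1)) (him : i + 1 < m) :
    codeF m (w * sw i) i = codeF m w (i + 1) + 1 := by
  unfold codeF
  have hv : ∀ x, (w * sw i) x = w (sw i x) := fun _ => rfl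
  have hset : (Finset.Ioo i m).filter (fun k => (w * sw i) k < (w * sw i) i)
      = insert (i + 1) ((Finset.Ioo (i + 1) m).filter (fun k => w k < w (i + 1))) := by
    ext k
    simp only [Finset.mem_filter, Finset.mem_Ioo, Finset.mem_insert]
    constructor
    · rintro ⟨⟨hk1, hk2⟩, hk3⟩
      by_cases hk : k = i + 1
      · left; exact hk
      · right
        have hks : sw i k = k := by rw [sw_apply]; split_ifs <;> omega
        rw [hv, hv, hks, Equiv.swap_apply_left] at hk3
        exact ⟨⟨by omega, hk2⟩, hk3⟩
    · rintro (rfl | ⟨⟨hk1, hk2⟩, hk3⟩)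
      · refine ⟨⟨by omega, him⟩, ?_⟩
        rw [hv, hv, Equiv.swap_apply_right, Equiv.swap_apply_left]
        exact hasc
      · have hks : sw i k = k := by rw [sw_apply]; split_ifs <;> omega
        refine ⟨⟨by omega, hk2⟩, ?_⟩
        rw [hv, hv, hks, Equiv.swap_apply_left]
        exact hk3
  rw [hset]
  rw [Finset.card_insert_of_notMem (fun hmem => by
    have h1 := (Finset.mem_Ioo.mp (Finset.mem_filter.mp hmem).1).1
    omega)]

lemma codeF_sw_at_i1 {m i : ℕ} {w : Equiv.Perm ℕ} (hasc : w i < w (i + 1)) (him : i + 1 < m) :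
    codeF m (w * sw i) (i + 1) = codeF m w i := by
  unfold codeF
  have hv : ∀ x, (w * sw i) x = w (sw i x) := fun _ => rfl
  have hleft : (Finset.Ioo (i + 1) m).filter (fun k => (w * sw i) k < (w * sw i) (i + 1))
      = (Finset.Ioo (i + 1) m).filter (fun k => w k < w i) := by
    apply Finset.filter_congr
    intro k hk
    rw [Finset.mem_Ioo] at hk
    have hks : sw i k = k := by rw [sw_apply]; split_ifs <;> omega
    rw [hv, hv, hks, Equiv.swap_apply_right]
  have hright : (Finset.Ioo i m).filter (fun k => w k < w i)
      = (Finset.Ioo (i + 1) m).filter (fun k => w k < w i) := by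
    ext k
    simp only [Finset.mem_filter, Finset.mem_Ioo]
    constructor
    · rintro ⟨⟨hk1, hk2⟩, hk3⟩
      have : k ≠ i + 1 := fun h => by rw [h] at hk3; omega
      exact ⟨⟨by omega, hk2⟩, hk3⟩
    · rintro ⟨⟨hk1, hk2⟩, hk3⟩
      exact ⟨⟨by omega, hk2⟩, hk3⟩
  rw [hleft, hright]

lemma codeF_sw_other {m i j : ℕ} {w : Equiv.Perm ℕ} (him : i + 1 < m)
    (hj1 : j ≠ i) (hj2 : j ≠ i + 1) : codeF m (w * sw i) j = codeF m w j := by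
  unfold codeF
  have hv : ∀ x, (w * sw i) x = w (sw i x) := fun _ => rfl
  have hjs : sw i j = j := by rw [sw_apply]; split_ifs <;> omega
  rcases Nat.lt_trichotomy j i with hcase | hcase | hcase
  · -- j < i : reindex by sw i
    apply Finset.card_bij' (fun k _ => sw i k) (fun k _ => sw i k)
    · intro k hk
      rw [Finset.mem_filter, Finset.mem_Ioo] at hk
      obtain ⟨⟨hk1, hk2⟩, hk3⟩ := hk
      rw [hv, hv, hjs] at hk3
      rw [Finset.mem_filter, Finset.mem_Ioo]
      refine ⟨⟨?_, ?_⟩, hk3⟩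
      · rw [sw_apply]; split_ifs <;> omega
      · rw [sw_apply]; split_ifs <;> omega
    · intro k hk
      rw [Finset.mem_filter, Finset.mem_Ioo] at hk
      obtain ⟨⟨hk1, hk2⟩, hk3⟩ := hk
      rw [Finset.mem_filter, Finset.mem_Ioo]
      refine ⟨⟨?_, ?_⟩, ?_⟩
      · rw [sw_apply]; split_ifs <;> omega
      · rw [sw_apply]; split_ifs <;> omega
      · rw [hv, hv, hjs, sw_sw]
        exact hk3
    · intro k _; exact sw_sw i k
    · intro k _; exact sw_sw i k
  · omega
  · -- j > i
    apply congrArg Finset.card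
    apply Finset.filter_congr
    intro k hk
    rw [Finset.mem_Ioo] at hk
    have hks : sw i k = k := by rw [sw_apply]; split_ifs <;> omega
    rw [hv, hv, hks, hjs]

lemma code_full_eq_w0 {m : ℕ} {w : Equiv.Perm ℕ} (hw : memSn m w)
    (hfull : ∀ j, j < m → codeF m w j = m - j - 1) : w = w0 m := by
  have hdec : ∀ j k, j < k → k < m → w k < w j := by
    intro j k hjk hkm
    have hj : j < m := by omega
    have hsub : (Finset.Ioo j m).filter (fun k => w k < w j) = Finset.Ioo j m := by
      apply Finset.eq_of_subset_of_card_le (Finset.filter_subset _ _)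
      rw [Nat.card_Ioo]
      have hfj := hfull j hj
      unfold codeF at hfj
      omega
    have hk : k ∈ (Finset.Ioo j m).filter (fun k => w k < w j) := by
      rw [hsub]; exact Finset.mem_Ioo.mpr ⟨hjk, hkm⟩
    exact (Finset.mem_filter.mp hk).2
  have hval : ∀ j, j < m → w j = m - 1 - j := by
    intro j hj
    have hwj : w j < m := memSn_apply_lt hw hj
    have hub : w j + j + 1 ≤ m := by
      have himg : (Finset.Iic j).image w ⊆ Finset.Icc (w j) (m - 1) := by
        intro x hx
        rw [Finset.mem_image] at hx
        obtain ⟨k, hk, rfl⟩ := hx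
        rw [Finset.mem_Iic] at hk
        rw [Finset.mem_Icc]
        have hkm : k < m := by omega
        have hwk : w k < m := memSn_apply_lt hw hkm
        rcases eq_or_lt_of_le hk with rfl | hlt
        · omega
        · have := hdec k j hlt hj
          omega
      have hcard := Finset.card_le_card himg
      rw [Finset.card_image_of_injective _ w.injective, Nat.card_Iic, Nat.card_Icc] at hcard
      omega
    have hlb : m - j - 1 ≤ w j := by
      have himg : (Finset.Ioo j m).image w ⊆ Finset.Iio (w j) := by
        intro x hx
        rw [Finset.mem_image] at hx
        obtain ⟨k, hk, rfl⟩ := hx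
        rw [Finset.mem_Ioo] at hk
        rw [Finset.mem_Iio]
        exact hdec j k hk.1 hk.2
      have hcard := Finset.card_le_card himg
      rw [Finset.card_image_of_injective _ w.injective, Nat.card_Ioo, Nat.card_Iio] at hcard
      exact hcard
    omega
  apply Equiv.ext
  intro x
  rw [w0_apply]
  split_ifs with hx
  · exact hval x hx
  · exact hw x (by omega)

lemma dominant_full (SD : SchubertData) {m : ℕ} {w : Equiv.Perm ℕ} (hw : memSn m w)
    (hfull : ∀ j, j < m → codeF m w j = m - j - 1) :
    SD.S w = ∏ j ∈ Finset.range m, X j ^ codeF m w j := by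
  have hw0 : w = w0 m := code_full_eq_w0 hw hfull
  have key : SD.S w = staircase m := by
    rw [SD.hS m w hw, hw0]
    have h1 : (w0 m)⁻¹ * w0 m = 1 := by simp
    rw [h1, SD.Dw_one]
    rfl
  rw [key]
  unfold staircase
  apply Finset.prod_congr rfl
  intro j hj
  rw [hfull j (Finset.mem_range.mp hj)]
  congr 1
  omega

lemma dominant_S (SD : SchubertData) {m : ℕ} :
    ∀ (N : ℕ) (w : Equiv.Perm ℕ), memSn m w →
      (∀ j, j + 1 < m → codeF m w (j + 1) ≤ codeF m w j) →
      (∑ j ∈ Finset.range m, (m - j - 1)) ≤ (∑ j ∈ Finset.range m, codeF m w j) + N →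
      SD.S w = ∏ j ∈ Finset.range m, X j ^ codeF m w j := by
  intro N
  induction N with
  | zero =>
    intro w hw hdom hsum
    apply dominant_full SD hw
    intro j hj
    by_contra hne
    have hlt : codeF m w j < m - j - 1 := lt_of_le_of_ne (codeF_le w j) hne
    have h2 : ∑ j ∈ Finset.range m, codeF m w j < ∑ j ∈ Finset.range m, (m - j - 1) :=
      Finset.sum_lt_sum (f := fun j => codeF m w j) (g := fun j => m - j - 1)
        (fun j _ => codeF_le w j) ⟨j, Finset.mem_range.mpr hj, hlt⟩
    omega
  | succ N IH =>
    intro w hw hdom hsum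
    by_cases hful : ∀ j, j < m → codeF m w j = m - j - 1
    · exact dominant_full SD hw hful
    · push_neg at hful
      obtain ⟨j0, hj0, hj0ne⟩ := hful
      set A := (Finset.range m).filter (fun j => codeF m w j < m - j - 1) with hA
      have hAne : A.Nonempty :=
        ⟨j0, Finset.mem_filter.mpr ⟨Finset.mem_range.mpr hj0,
          lt_of_le_of_ne (codeF_le w j0) hj0ne⟩⟩
      have hAimg : (A.image (codeF m w)).Nonempty := hAne.image _
      set V := (A.image (codeF m w)).min' hAimg with hV
      have hVmem : V ∈ A.image (codeF m w) := Finset.min'_mem _ _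
      obtain ⟨i0, hi0A, hi0V⟩ := Finset.mem_image.mp hVmem
      have hBne : (A.filter (fun j => codeF m w j = V)).Nonempty :=
        ⟨i0, Finset.mem_filter.mpr ⟨hi0A, hi0V⟩⟩
      set i := (A.filter (fun j => codeF m w j = V)).min' hBne with hi
      have hiB : i ∈ A.filter (fun j => codeF m w j = V) := Finset.min'_mem _ _
      have hiA : i ∈ A := (Finset.mem_filter.mp hiB).1
      have hciV : codeF m w i = V := (Finset.mem_filter.mp hiB).2
      have hidef : codeF m w i < m - i - 1 := (Finset.mem_filter.mp hiA).2
      have him2 : i < m := Finset.mem_range.mp (Finset.mem_filter.mp hiA).1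
      have him : i + 1 < m := by omega
      have hVle : ∀ j, j ∈ A → V ≤ codeF m w j := fun j hj =>
        Finset.min'_le _ _ (Finset.mem_image_of_mem _ hj)
      have hc1 : codeF m w (i + 1) = codeF m w i := by
        have hd := hdom i him
        rcases eq_or_lt_of_le hd with h | h
        · exact h
        · exfalso
          have hmemA : i + 1 ∈ A := by
            rw [hA, Finset.mem_filter]
            exact ⟨Finset.mem_range.mpr him, by omega⟩
          have := hVle _ hmemA
          omega
      have hprev : 0 < i → codeF m w i < codeF m w (i - 1) := by
        intro hpos
        have hd := hdom (i - 1) (by omega)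
        have hii : i - 1 + 1 = i := by omega
        rw [hii] at hd
        rcases eq_or_lt_of_le hd with h | h
        · exfalso
          have hmemA : i - 1 ∈ A := by
            rw [hA, Finset.mem_filter]
            exact ⟨Finset.mem_range.mpr (by omega), by omega⟩
          have hmemB : i - 1 ∈ A.filter (fun j => codeF m w j = V) :=
            Finset.mem_filter.mpr ⟨hmemA, by omega⟩
          have := Finset.min'_le _ _ hmemB
          omega
        · exact h
      have hasc : w i < w (i + 1) := by
        by_contra hge
        push_neg at hge
        have hne2 : w (i + 1) ≠ w i := fun h => by
          have := w.injective h
          omega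
        have hdesc : w (i + 1) < w i := lt_of_le_of_ne hge hne2
        have hsub : insert (i + 1) ((Finset.Ioo (i + 1) m).filter (fun k => w k < w (i + 1)))
            ⊆ (Finset.Ioo i m).filter (fun k => w k < w i) := by
          intro k hk
          rcases Finset.mem_insert.mp hk with rfl | hk'
          · exact Finset.mem_filter.mpr ⟨Finset.mem_Ioo.mpr ⟨by omega, him⟩, hdesc⟩
          · obtain ⟨hk1, hk2⟩ := Finset.mem_filter.mp hk'
            rw [Finset.mem_Ioo] at hk1
            exact Finset.mem_filter.mpr ⟨Finset.mem_Ioo.mpr ⟨by omega, hk1.2⟩, by omega⟩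
        have hcard := Finset.card_le_card hsub
        rw [Finset.card_insert_of_notMem (fun hmem => by
          have h1 := (Finset.mem_Ioo.mp (Finset.mem_filter.mp hmem).1).1
          omega)] at hcard
        have hfin : codeF m w (i + 1) + 1 ≤ codeF m w i := hcard
        omega
      have hw' : memSn m (w * sw i) := memSn_mul hw (memSn_sw him)
      have e1 : codeF m (w * sw i) i = codeF m w (i + 1) + 1 := codeF_sw_at_i hasc him
      have e2 : codeF m (w * sw i) (i + 1) = codeF m w i := codeF_sw_at_i1 hasc him
      have e3 : ∀ j, j ≠ i → j ≠ i + 1 → codeF m (w * sw i) j = codeF m w j :=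
        fun j h1 h2 => codeF_sw_other him h1 h2
      have hdom' : ∀ j, j + 1 < m → codeF m (w * sw i) (j + 1) ≤ codeF m (w * sw i) j := by
        intro j hjm
        rcases Nat.lt_trichotomy (j + 1) i with hcase | hcase | hcase
        · rw [e3 (j + 1) (by omega) (by omega), e3 j (by omega) (by omega)]
          exact hdom j hjm
        · rw [hcase, e1, e3 j (by omega) (by omega), hc1]
          have h5 := hprev (by omega)
          rw [show i - 1 = j by omega] at h5
          omega
        · rcases Nat.lt_trichotomy j (i + 1) with hcase' | hcase' | hcase'
          · have hj : j = i := by omega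
            subst hj
            rw [e2, e1, hc1]
            omega
          · subst hcase'
            rw [e3 (i + 1 + 1) (by omega) (by omega), e2]
            have := hdom (i + 1) hjm
            omega
          · rw [e3 (j + 1) (by omega) (by omega), e3 j (by omega) (by omega)]
            exact hdom j hjm
      have hmem1 : i ∈ Finset.range m := Finset.mem_range.mpr (by omega)
      have hmem2 : i + 1 ∈ (Finset.range m).erase i :=
        Finset.mem_erase.mpr ⟨by omega, Finset.mem_range.mpr him⟩
      have hsum' : ∑ j ∈ Finset.range m, codeF m (w * sw i) j
          = (∑ j ∈ Finset.range m, codeF m w j) + 1 := by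
        rw [← Finset.add_sum_erase _ _ hmem1, ← Finset.add_sum_erase _ _ hmem2,
          ← Finset.add_sum_erase _ (codeF m w) hmem1, ← Finset.add_sum_erase _ (codeF m w) hmem2]
        have hrest : ∑ j ∈ ((Finset.range m).erase i).erase (i + 1), codeF m (w * sw i) j
            = ∑ j ∈ ((Finset.range m).erase i).erase (i + 1), codeF m w j := by
          apply Finset.sum_congr rfl
          intro j hj
          have hj1 := (Finset.mem_erase.mp hj).1
          have hj2 := (Finset.mem_erase.mp (Finset.mem_erase.mp hj).2).1
          exact e3 j hj2 hj1
        rw [hrest, e1, e2, hc1]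
        ring
      have hIH := IH (w * sw i) hw' hdom' (by omega)
      have hkey := S_eq_D SD hw him hasc
      rw [hkey, hIH]
      set M := ∏ j ∈ ((Finset.range m).erase i).erase (i + 1),
        (X j : MvPolynomial ℕ ℤ) ^ codeF m w j with hM
      have hMinv : rename (⇑(Equiv.swap i (i + 1))) M = M := by
        rw [hM]
        apply rename_sw_prod
        intro j hj
        have hj1 := (Finset.mem_erase.mp hj).1
        have hj2 := (Finset.mem_erase.mp (Finset.mem_erase.mp hj).2).1
        exact ⟨hj2, hj1⟩
      have hprodw' : ∏ j ∈ Finset.range m, (X j : MvPolynomial ℕ ℤ) ^ codeF m (w * sw i) j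
          = X i ^ (codeF m w i + 1) * X (i + 1) ^ codeF m w i * M := by
        rw [← Finset.mul_prod_erase _ _ hmem1, ← Finset.mul_prod_erase _ _ hmem2]
        have hrest : ∏ j ∈ ((Finset.range m).erase i).erase (i + 1),
            (X j : MvPolynomial ℕ ℤ) ^ codeF m (w * sw i) j = M := by
          rw [hM]
          apply Finset.prod_congr rfl
          intro j hj
          have hj1 := (Finset.mem_erase.mp hj).1
          have hj2 := (Finset.mem_erase.mp (Finset.mem_erase.mp hj).2).1
          rw [e3 j hj2 hj1]
        rw [hrest, e1, e2, hc1, mul_assoc]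
      rw [hprodw', D_monomial SD i (codeF m w i) M hMinv]
      rw [← Finset.mul_prod_erase _ _ hmem1, ← Finset.mul_prod_erase _ _ hmem2, ← hM, hc1,
        mul_assoc]

end SchubertAux

namespace SchubertAux

lemma asc_mono {n : ℕ} {w : Equiv.Perm ℕ} (htail : ∀ a, n ≤ a → w a < w (a + 1)) :
    ∀ a b, n ≤ a → a < b → w a < w b := by
  have hstep : ∀ d a, n ≤ a → w a < w (a + d + 1) := by
    intro d
    induction d with
    | zero => intro a ha; simpa using htail a ha
    | succ d hd =>
      intro a ha
      have h1 := hd a ha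
      have h2 := htail (a + d + 1) (by omega)
      have he : a + (d + 1) + 1 = a + d + 1 + 1 := by omega
      rw [he]
      omega
  intro a b ha hab
  have := hstep (b - a - 1) a ha
  rw [show a + (b - a - 1) + 1 = b by omega] at this
  exact this

lemma tail_fix {n : ℕ} {w : Equiv.Perm ℕ} (htail : ∀ a, n ≤ a → w a < w (a + 1))
    (hvals : ∀ p, p < n → w p < n) : memSn n w := by
  have himg : (Finset.range n).image w = Finset.range n := by
    apply Finset.eq_of_subset_of_card_le
    · intro x hx
      rw [Finset.mem_image] at hx
      obtain ⟨p, hp, rfl⟩ := hx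
      exact Finset.mem_range.mpr (hvals p (Finset.mem_range.mp hp))
    · rw [Finset.card_image_of_injective _ w.injective]
  have hge : ∀ j, n ≤ j → n ≤ w j := by
    intro j hj
    by_contra hlt
    push_neg at hlt
    have hmem : w j ∈ (Finset.range n).image w := by
      rw [himg]; exact Finset.mem_range.mpr hlt
    rw [Finset.mem_image] at hmem
    obtain ⟨p, hp, hpe⟩ := hmem
    have := w.injective hpe
    rw [Finset.mem_range] at hp
    omega
  have hwge : ∀ j, n ≤ j → j ≤ w j := by
    intro j hj
    have hg : StrictMono (fun k => w (n + k) - n) := by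
      intro a b hab
      have h1 := asc_mono htail (n + a) (n + b) (by omega) (by omega)
      have h2 := hge (n + a) (by omega)
      have h3 := hge (n + b) (by omega)
      simp only
      omega
    have h4 := hg.le_apply (x := j - n)
    rw [show n + (j - n) = j from by omega] at h4
    have h5 := hge j hj
    omega
  have hinvge : ∀ v, n ≤ v → n ≤ w⁻¹ v := by
    intro v hv
    by_contra hlt
    push_neg at hlt
    have := hvals (w⁻¹ v) hlt
    rw [perm_apply_inv_self] at this
    omega
  have hinvmono : ∀ a, n ≤ a → ∀ b, a < b → w⁻¹ a < w⁻¹ b := by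
    intro a ha b hab
    rcases Nat.lt_trichotomy (w⁻¹ a) (w⁻¹ b) with h | h | h
    · exact h
    · exfalso
      have : a = b := by
        rw [← perm_apply_inv_self w a, h, perm_apply_inv_self]
      omega
    · exfalso
      have := asc_mono htail (w⁻¹ b) (w⁻¹ a) (hinvge b (by omega)) h
      rw [perm_apply_inv_self, perm_apply_inv_self] at this
      omega
  have hinvgeid : ∀ j, n ≤ j → j ≤ w⁻¹ j := by
    intro j hj
    have hg : StrictMono (fun k => w⁻¹ (n + k) - n) := by
      intro a b hab
      have h1 := hinvmono (n + a) (by omega) (n + b) (by omega)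
      have h2 := hinvge (n + a) (by omega)
      have h3 := hinvge (n + b) (by omega)
      simp only
      omega
    have h4 := hg.le_apply (x := j - n)
    rw [show n + (j - n) = j from by omega] at h4
    have h5 := hinvge j hj
    omega
  intro j hj
  have h1 := hwge j hj
  have h2 := hinvgeid (w j) (hge j hj)
  rw [perm_inv_apply_self] at h2
  omega

lemma main_aux (SD : SchubertData) {n m : ℕ} (hn : 1 ≤ n) (hnm : n ≤ m) :
    ∀ (K : ℕ) (w : Equiv.Perm ℕ), memSn m w → (∀ i, n ≤ i → w i < w (i + 1)) →
      ¬ memSn n w → m * m ≤ permLength w + K → SD.S w ∈ In n := by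
  intro K
  induction K with
  | zero =>
    intro w hw hinc hnot hK
    exfalso
    have hsub : invF m w ⊆ Finset.range m ×ˢ Finset.range m := Finset.filter_subset _ _
    have hne : (0, 0) ∉ invF m w := by
      rw [mem_invF]
      rintro ⟨_, h, _⟩
      omega
    have h00 : (0, 0) ∈ Finset.range m ×ˢ Finset.range m := by
      simp only [Finset.mem_product, Finset.mem_range]
      omega
    have hlt : (invF m w).card < m * m := by
      have := Finset.card_lt_card (Finset.ssubset_iff_of_subset hsub |>.mpr ⟨(0, 0), h00, hne⟩)
      rwa [Finset.card_product, Finset.card_range] at this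
    rw [permLength_eq hw] at hK
    omega
  | succ K IH =>
    intro w hw hinc hnot hK
    by_cases hex : ∃ i, i + 1 < n ∧ w i < w (i + 1)
    · obtain ⟨i, hin, hasc⟩ := hex
      have him : i + 1 < m := by omega
      have hw' : memSn m (w * sw i) := memSn_mul hw (memSn_sw him)
      have hfix : ∀ j, n ≤ j → (w * sw i) j = w j := by
        intro j hj
        show w (sw i j) = w j
        rw [show sw i j = j from by rw [sw_apply]; split_ifs <;> omega]
      have hinc' : ∀ j, n ≤ j → (w * sw i) j < (w * sw i) (j + 1) := by
        intro j hj
        rw [hfix j hj, hfix (j + 1) (by omega)]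
        exact hinc j hj
      have hnot' : ¬ memSn n (w * sw i) := by
        intro hcon
        apply hnot
        intro j hj
        rw [← hfix j hj]
        exact hcon j hj
      have hlen : permLength (w * sw i) = permLength w + 1 := permLength_mul_sw_asc hw him hasc
      have hSin := IH (w * sw i) hw' hinc' hnot' (by omega)
      rw [S_eq_D SD hw him hasc]
      exact D_mem_In SD (by omega) hSin
    · push_neg at hex
      have hdesc : ∀ i, i + 1 < n → w (i + 1) < w i := by
        intro i hi
        have h1 := hex i hi
        have h2 : w i ≠ w (i + 1) := fun h => by
          have := w.injective h
          omega
        omega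
      have hfront : ∀ q p, q < p → p < n → w p < w q := by
        have hstep : ∀ d q, q + d + 1 < n → w (q + d + 1) < w q := by
          intro d
          induction d with
          | zero => intro q hq; simpa using hdesc q (by omega)
          | succ d hd =>
            intro q hq
            have h1 := hd q (by omega)
            have h2 := hdesc (q + d + 1) (by omega)
            have he : q + (d + 1) + 1 = q + d + 1 + 1 := by omega
            rw [he]
            omega
        intro q p hqp hpn
        have := hstep (p - q - 1) q (by omega)
        rw [show q + (p - q - 1) + 1 = p by omega] at this
        exact this
      have htailmono : ∀ a b, n ≤ a → a < b → w a < w b := asc_mono hinc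
      have hexp : ∃ p, p < n ∧ n ≤ w p := by
        by_contra hcon
        push_neg at hcon
        exact hnot (tail_fix hinc hcon)
      obtain ⟨p, hpn, hwp⟩ := hexp
      have hw0n : n ≤ w 0 := by
        rcases Nat.eq_zero_or_pos p with rfl | hp
        · exact hwp
        · have := hfront 0 p hp hpn
          omega
      have hcodehigh : ∀ j, n ≤ j → codeF m w j = 0 := by
        intro j hj
        unfold codeF
        rw [Finset.card_eq_zero, Finset.filter_eq_empty_iff]
        intro k hk
        rw [Finset.mem_Ioo] at hk
        have := htailmono j k hj hk.1
        omega
      have hcodelow : ∀ q, q < n → codeF m w q = w q := by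
        intro q hq
        unfold codeF
        have hbij : ((Finset.Ioo q m).filter (fun k => w k < w q)).card
            = (Finset.range (w q)).card := by
          apply Finset.card_bij' (fun k _ => w k) (fun v _ => w⁻¹ v)
          · intro k hk
            rw [Finset.mem_filter] at hk
            exact Finset.mem_range.mpr hk.2
          · intro v hv
            rw [Finset.mem_range] at hv
            have hwq : w q < m := memSn_apply_lt hw (by omega)
            have hvm : v < m := by omega
            have hpre : w⁻¹ v < m := memSn_apply_lt (memSn_inv hw) hvm
            have happ : w (w⁻¹ v) = v := perm_apply_inv_self w v
            rw [Finset.mem_filter, Finset.mem_Ioo]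
            refine ⟨⟨?_, hpre⟩, by rw [happ]; exact hv⟩
            by_contra hle
            push_neg at hle
            rcases eq_or_lt_of_le hle with heq | hlt
            · rw [heq] at happ
              omega
            · have := hfront (w⁻¹ v) q hlt hq
              omega
          · intro k _
            exact perm_inv_apply_self w k
          · intro v _
            exact perm_apply_inv_self w v
        rw [hbij, Finset.card_range]
      have hdom : ∀ j, j + 1 < m → codeF m w (j + 1) ≤ codeF m w j := by
        intro j hj
        rcases Nat.lt_or_ge (j + 1) n with h | h
        · rw [hcodelow (j + 1) h, hcodelow j (by omega)]
          exact le_of_lt (hdesc j h)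
        · rw [hcodehigh (j + 1) h]
          exact Nat.zero_le _
      have hdomS := dominant_S SD (∑ j ∈ Finset.range m, (m - j - 1)) w hw hdom (by omega)
      rw [hdomS]
      have h0mem : (0 : ℕ) ∈ Finset.range m := Finset.mem_range.mpr (by omega)
      rw [← Finset.mul_prod_erase _ _ h0mem, hcodelow 0 (by omega)]
      have hsplit : (X 0 : MvPolynomial ℕ ℤ) ^ (w 0) = X 0 ^ n * X 0 ^ (w 0 - n) := by
        rw [← pow_add]
        congr 1
        omega
      rw [hsplit, mul_assoc]
      exact Ideal.mul_mem_right _ _ (X0_pow_mem_In hn)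

end SchubertAux

open SchubertAux

/-- if `w ∈ S^{(n)} \ S_n`, i.e. `w(n+1) < w(n+2) < ⋯` but `w ∉ S_n`,
then the Schubert polynomial `𝔖_w` lies in the ideal `I_n = ⟨e_1, …, e_n⟩`. -/
theorem schubert_mem_In (SD : SchubertData) (n : ℕ) (w : Equiv.Perm ℕ)
    (hfin : finSupp w)
    (hinc : ∀ i, n ≤ i → w i < w (i + 1))
    (hnot : ¬ memSn n w) :
    SD.S w ∈ In n := by
  rcases Nat.eq_zero_or_pos n with rfl | hn
  · exact absurd (tail_fix hinc (fun p hp => absurd hp (Nat.not_lt_zero p))) hnot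
  · obtain ⟨m0, hm0⟩ := hfin
    exact main_aux SD hn (show n ≤ m0 + n from by omega) ((m0 + n) * (m0 + n)) w
      (memSn_mono (by omega) hm0) hinc hnot (by omega)
end
end

section
/- Given any permutation $w$ with $w \in S^{(n)} \setminus S_n$, let $w'$ be the permutation obtained by rearranging $(w(1),\ldots,w(n))$ in decreasing order and setting $w'(i) = w(i)$ for $i > n$. Then $w'(1) > n$, there exists $v \in S_n$ with $wv = w'$ and $l(v) = l(w') - l(w)$. -/
open MvPolynomial Finset

noncomputable section

lemma permLength_eq_card (u : Equiv.Perm ℕ) (N : ℕ) (h : memSn N u) :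
    permLength u =
      ((Finset.range N ×ˢ Finset.range N).filter
        (fun p => p.1 < p.2 ∧ u p.2 < u p.1)).card := by
  classical
  have hlt : ∀ i, i < N → u i < N := by
    intro i hi
    by_contra hc
    push_neg at hc
    have h2 : u (u i) = u i := h (u i) hc
    have := u.injective h2
    omega
  have hset : {p : ℕ × ℕ | p.1 < p.2 ∧ u p.2 < u p.1} =
      ↑((Finset.range N ×ˢ Finset.range N).filter
        (fun p => p.1 < p.2 ∧ u p.2 < u p.1)) := by
    ext p
    simp only [Finset.coe_filter, Finset.mem_product, Finset.mem_range, Set.mem_setOf_eq]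
    constructor
    · rintro ⟨h1, h2⟩
      refine ⟨⟨?_, ?_⟩, h1, h2⟩
      · by_contra hc; push_neg at hc
        have e1 := h p.1 hc
        have e2 := h p.2 (by omega)
        omega
      · by_contra hc; push_neg at hc
        have e2 := h p.2 hc
        by_cases h1' : p.1 < N
        · have := hlt p.1 h1'; omega
        · have e1 := h p.1 (by omega); omega
    · rintro ⟨_, h1, h2⟩; exact ⟨h1, h2⟩
  have hh : permLength u = {p : ℕ × ℕ | p.1 < p.2 ∧ u p.2 < u p.1}.ncard :=
    Nat.card_coe_set_eq _
  rw [hh, hset, Set.ncard_coe_finset]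

/-- for `w ∈ S^{(n)} \ S_n`, the rearrangement `w'` of `(w(1), …, w(n))` in
decreasing order (with `w'(i) = w(i)` for `i > n`) satisfies `w'(1) > n`, and there is
`v ∈ S_n` with `wv = w'` and `l(v) = l(w') - l(w)`. (Everything is written 0-indexed.) -/
theorem decreasing_rearrangement (n : ℕ) (w : Equiv.Perm ℕ) (hfin : finSupp w)
    (hinc : ∀ i, n ≤ i → w i < w (i + 1))
    (hnot : ¬ memSn n w) :
    ∃ w' : Equiv.Perm ℕ,
      (∀ i, n ≤ i → w' i = w i) ∧
      (∀ i j, i < j → j < n → w' j < w' i) ∧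
      n ≤ w' 0 ∧
      ∃ v : Equiv.Perm ℕ, memSn n v ∧ w * v = w' ∧
        permLength w + permLength v = permLength w' := by
  classical
  obtain ⟨N0, hN0⟩ := hfin
  set N := max N0 n with hN
  have hNw : memSn N w := fun i hi => hN0 i (le_trans (le_max_left _ _) hi)
  have hnN : n ≤ N := le_max_right _ _
  -- strict monotonicity of w on [n, ∞)
  have hmono : ∀ i j, n ≤ i → i < j → w i < w j := by
    intro i j hi hij
    induction j with
    | zero => omega
    | succ k ih =>
      rcases Nat.lt_succ_iff_lt_or_eq.mp hij with h | h
      · exact lt_trans (ih h) (hinc k (by omega))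
      · subst h; exact hinc i hi
  -- the sorting permutation
  set σ : Equiv.Perm (Fin n) :=
    Tuple.sort (fun i : Fin n => OrderDual.toDual (w i)) with hσ
  set v : Equiv.Perm ℕ := embedPerm n σ with hv
  have hvmem : memSn n v := by
    intro i hi
    exact Equiv.Perm.extendDomain_apply_not_subtype σ Fin.equivSubtype (by omega)
  have hvfin : ∀ (i : ℕ) (hi : i < n), v i = ((σ ⟨i, hi⟩ : Fin n) : ℕ) := by
    intro i hi
    rw [hv, embedPerm, Equiv.Perm.extendDomain_apply_subtype σ Fin.equivSubtype hi]
    rfl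
  have hvlt : ∀ i, i < n → v i < n := by
    intro i hi; rw [hvfin i hi]; exact (σ _).isLt
  have hvinv : ∀ i, i < n → v⁻¹ i < n := by
    intro i hi
    by_contra hc; push_neg at hc
    have h1 := hvmem _ hc
    rw [show v (v⁻¹ i) = i from Equiv.apply_symm_apply v i] at h1
    omega
  -- w * v is strictly decreasing on [0, n)
  have hdec : ∀ i j, i < j → j < n → (w * v) j < (w * v) i := by
    intro i j hij hj
    have hi : i < n := lt_trans hij hj
    have hmon := Tuple.monotone_sort (fun i : Fin n => OrderDual.toDual (w i))
    have hle : (⟨i, hi⟩ : Fin n) ≤ ⟨j, hj⟩ := by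
      simp [Fin.le_def]; omega
    have h1 := hmon hle
    simp only [Function.comp_apply, OrderDual.toDual_le_toDual] at h1
    have hne : ((σ ⟨j, hj⟩ : Fin n) : ℕ) ≠ ((σ ⟨i, hi⟩ : Fin n) : ℕ) := by
      intro he
      have : σ ⟨j, hj⟩ = σ ⟨i, hi⟩ := Fin.ext he
      have := σ.injective this
      simp only [Fin.mk.injEq] at this
      omega
    have hlt : w ((σ ⟨j, hj⟩ : Fin n) : ℕ) < w ((σ ⟨i, hi⟩ : Fin n) : ℕ) :=
      lt_of_le_of_ne h1 (fun he => hne (w.injective he))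
    simp only [Equiv.Perm.mul_apply]
    rw [hvfin i hi, hvfin j hj]
    exact hlt
  -- there is m < n with n ≤ w m
  have hex : ∃ m, m < n ∧ n ≤ w m := by
    by_contra hc
    push_neg at hc
    apply hnot
    have himg : ∀ i, n ≤ i → n ≤ w i := by
      intro i hi
      by_contra hc2
      push_neg at hc2
      have hsub : Finset.image w (Finset.range n) ⊆ Finset.range n := by
        intro x hx
        simp only [Finset.mem_image, Finset.mem_range] at *
        obtain ⟨a, ha, rfl⟩ := hx
        exact hc a ha
      have heq : Finset.image w (Finset.range n) = Finset.range n :=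
        Finset.eq_of_subset_of_card_le hsub
          (by rw [Finset.card_image_of_injective _ w.injective])
      have hmem : w i ∈ Finset.image w (Finset.range n) := by
        rw [heq]; simp only [Finset.mem_range]; omega
      simp only [Finset.mem_image, Finset.mem_range] at hmem
      obtain ⟨a, ha, he⟩ := hmem
      have := w.injective he
      omega
    have himg' : ∀ i, n ≤ i → n ≤ w⁻¹ i := by
      intro i hi
      by_contra hc2
      push_neg at hc2
      have h1 := hc _ hc2
      rw [Equiv.Perm.coe_inv, Equiv.apply_symm_apply] at h1
      omega
    have hmono' : ∀ i j, n ≤ i → i < j → w⁻¹ i < w⁻¹ j := by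
      intro i j hi hij
      rcases lt_trichotomy (w⁻¹ i) (w⁻¹ j) with h | h | h
      · exact h
      · exfalso
        have : i = j := by
          have := congrArg w h
          rwa [Equiv.Perm.coe_inv, Equiv.apply_symm_apply, Equiv.apply_symm_apply] at this
        omega
      · exfalso
        have h2 := hmono _ _ (himg' j (by omega)) h
        rw [Equiv.Perm.coe_inv, Equiv.apply_symm_apply, Equiv.apply_symm_apply] at h2
        omega
    have hge : ∀ (u : Equiv.Perm ℕ), (∀ i, n ≤ i → n ≤ u i) →
        (∀ i j, n ≤ i → i < j → u i < u j) → ∀ i, n ≤ i → i ≤ u i := by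
      intro u h1 h2 i hi
      refine Nat.le_induction ?_ ?_ i hi
      · exact h1 n le_rfl
      · intro k hk ih
        have := h2 k (k + 1) hk (by omega)
        omega
    intro i hi
    have h1 := hge w himg hmono i hi
    have h2 := hge w⁻¹ himg' hmono' (w i) (himg i hi)
    rw [Equiv.Perm.coe_inv, Equiv.symm_apply_apply] at h2
    omega
  obtain ⟨m, hmn, hwm⟩ := hex
  refine ⟨w * v, ?_, hdec, ?_, v, hvmem, rfl, ?_⟩
  · intro i hi
    simp only [Equiv.Perm.mul_apply, hvmem i hi]
  · -- n ≤ (w * v) 0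
    have hk : v⁻¹ m < n := hvinv m hmn
    have hval : (w * v) (v⁻¹ m) = w m := by
      simp [Equiv.Perm.mul_apply]
    rcases Nat.eq_zero_or_pos (v⁻¹ m) with h | h
    · rw [h] at hval; omega
    · have h2 := hdec 0 (v⁻¹ m) h hk
      omega
  · -- length identity
    have hvN : memSn N v := fun i hi => hvmem i (le_trans hnN hi)
    have hwvN : memSn N (w * v) := by
      intro i hi
      simp only [Equiv.Perm.mul_apply, hvmem i (le_trans hnN hi)]
      exact hNw i hi
    rw [permLength_eq_card w N hNw, permLength_eq_card v N hvN,
      permLength_eq_card (w * v) N hwvN]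
    set T := Finset.range N ×ˢ Finset.range N with hT
    have hmemT : ∀ p : ℕ × ℕ, p ∈ T ↔ p.1 < N ∧ p.2 < N := by
      intro p; simp [hT, Finset.mem_product]
    set A : Finset (ℕ × ℕ) :=
      T.filter (fun p => p.2 < n ∧ p.1 < p.2 ∧ w p.2 < w p.1) with hA
    set M : Finset (ℕ × ℕ) :=
      T.filter (fun p => p.1 < n ∧ n ≤ p.2 ∧ w p.2 < w p.1) with hM
    set A' : Finset (ℕ × ℕ) :=
      T.filter (fun p => p.2 < n ∧ p.1 < p.2) with hA'
    set M' : Finset (ℕ × ℕ) :=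
      T.filter (fun p => p.1 < n ∧ n ≤ p.2 ∧ (w * v) p.2 < (w * v) p.1) with hM'
    set L : Finset (ℕ × ℕ) :=
      T.filter (fun p => p.2 < n ∧ p.1 < p.2 ∧ v p.2 < v p.1) with hL
    -- split of inversions of w
    have hsw : T.filter (fun p => p.1 < p.2 ∧ w p.2 < w p.1) = A ∪ M := by
      ext p
      simp only [hA, hM, Finset.mem_union, Finset.mem_filter]
      constructor
      · rintro ⟨hpT, h1, h2⟩
        by_cases h3 : p.2 < n
        · exact Or.inl ⟨hpT, h3, h1, h2⟩
        · push_neg at h3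
          refine Or.inr ⟨hpT, ?_, h3, h2⟩
          by_contra h4
          push_neg at h4
          have := hmono p.1 p.2 h4 h1
          omega
      · rintro (⟨hpT, h3, h1, h2⟩ | ⟨hpT, h3, h4, h2⟩)
        · exact ⟨hpT, h1, h2⟩
        · exact ⟨hpT, by omega, h2⟩
    have hdisjAM : Disjoint A M := by
      rw [Finset.disjoint_left]
      intro p hp hp'
      simp only [hA, hM, Finset.mem_filter] at hp hp'
      omega
    -- split of inversions of w * v
    have hsw' : T.filter (fun p => p.1 < p.2 ∧ (w * v) p.2 < (w * v) p.1) = A' ∪ M' := by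
      ext p
      simp only [hA', hM', Finset.mem_union, Finset.mem_filter]
      constructor
      · rintro ⟨hpT, h1, h2⟩
        by_cases h3 : p.2 < n
        · exact Or.inl ⟨hpT, h3, h1⟩
        · push_neg at h3
          refine Or.inr ⟨hpT, ?_, h3, h2⟩
          by_contra h4
          push_neg at h4
          have e1 : (w * v) p.1 = w p.1 := by
            simp only [Equiv.Perm.mul_apply, hvmem p.1 h4]
          have e2 : (w * v) p.2 = w p.2 := by
            simp only [Equiv.Perm.mul_apply, hvmem p.2 h3]
          have := hmono p.1 p.2 h4 h1
          omega
      · rintro (⟨hpT, h3, h1⟩ | ⟨hpT, h3, h4, h2⟩)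
        · exact ⟨hpT, h1, hdec p.1 p.2 h1 h3⟩
        · exact ⟨hpT, by omega, h2⟩
    have hdisjAM' : Disjoint A' M' := by
      rw [Finset.disjoint_left]
      intro p hp hp'
      simp only [hA', hM', Finset.mem_filter] at hp hp'
      omega
    -- inversions of v
    have hsv : T.filter (fun p => p.1 < p.2 ∧ v p.2 < v p.1) = L := by
      ext p
      simp only [hL, Finset.mem_filter]
      constructor
      · rintro ⟨hpT, h1, h2⟩
        refine ⟨hpT, ?_, h1, h2⟩
        by_contra h3
        push_neg at h3
        have e2 : v p.2 = p.2 := hvmem p.2 h3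
        by_cases h4 : p.1 < n
        · have := hvlt p.1 h4; omega
        · push_neg at h4
          have e1 : v p.1 = p.1 := hvmem p.1 h4
          omega
      · rintro ⟨hpT, h3, h1, h2⟩
        exact ⟨hpT, h1, h2⟩
    -- card M' = card M
    have hMM : M'.card = M.card := by
      apply Finset.card_nbij (fun p => (v p.1, p.2))
      · intro p hp
        simp only [Finset.mem_coe, hM', Finset.mem_filter, hmemT] at hp
        obtain ⟨⟨hp1, hp2⟩, h1, h2, h3⟩ := hp
        have hv1 : v p.1 < n := hvlt p.1 h1
        have e2 : v p.2 = p.2 := hvmem p.2 h2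
        simp only [Finset.mem_coe, hM, Finset.mem_filter, hmemT]
        refine ⟨⟨by omega, hp2⟩, hv1, h2, ?_⟩
        simp only [Equiv.Perm.mul_apply, e2] at h3
        exact h3
      · intro p _ q _ he
        simp only [Prod.mk.injEq] at he
        have := v.injective he.1
        exact Prod.ext this he.2
      · intro q hq
        simp only [Finset.coe_filter, Set.mem_setOf_eq, hM, hmemT] at hq
        obtain ⟨⟨hq1, hq2⟩, h1, h2, h3⟩ := hq
        refine ⟨(v⁻¹ q.1, q.2), ?_, ?_⟩
        · have hvq : v⁻¹ q.1 < n := hvinv q.1 h1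
          simp only [Finset.coe_filter, Set.mem_setOf_eq, hM', hmemT]
          refine ⟨⟨by omega, hq2⟩, hvq, h2, ?_⟩
          have e1 : v (v⁻¹ q.1) = q.1 := Equiv.apply_symm_apply v q.1
          have e2 : v q.2 = q.2 := hvmem q.2 h2
          simp only [Equiv.Perm.mul_apply, e1, e2]
          exact h3
        · simp only [Equiv.Perm.coe_inv, Equiv.apply_symm_apply]
    -- card A + card L = card A'
    have hAsub : A ⊆ A' := by
      intro p hp
      simp only [hA, hA', Finset.mem_filter] at *
      tauto
    have hLcard : L.card = (A' \ A).card := by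
      apply Finset.card_nbij (fun p => (v p.2, v p.1))
      · intro p hp
        simp only [Finset.mem_coe, hL, Finset.mem_filter, hmemT] at hp
        obtain ⟨⟨hp1, hp2⟩, h3, h1, h2⟩ := hp
        have hv1 : v p.1 < n := hvlt p.1 (by omega)
        have hv2 : v p.2 < n := hvlt p.2 h3
        have hwlt : w (v p.2) < w (v p.1) := by
          have := hdec p.1 p.2 h1 h3
          simpa only [Equiv.Perm.mul_apply] using this
        simp only [Finset.mem_coe, Finset.mem_sdiff, hA, hA', Finset.mem_filter, hmemT]
        refine ⟨⟨⟨by omega, by omega⟩, hv1, h2⟩, ?_⟩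
        rintro ⟨-, -, -, hbad⟩
        omega
      · intro p _ q _ he
        simp only [Prod.mk.injEq] at he
        have e1 := v.injective he.1
        have e2 := v.injective he.2
        exact Prod.ext e2 e1
      · intro q hq
        simp only [Finset.coe_sdiff, Set.mem_diff, Finset.mem_coe, Finset.mem_sdiff,
          hA, hA', Finset.mem_filter, hmemT] at hq
        obtain ⟨⟨⟨hq1, hq2⟩, h3, h1⟩, hnotA⟩ := hq
        have hwlt : w q.1 < w q.2 := by
          rcases lt_trichotomy (w q.1) (w q.2) with h | h | h
          · exact h
          · exfalso; have := w.injective h; omega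
          · exact absurd ⟨⟨hq1, hq2⟩, h3, h1, h⟩ hnotA
        have hvq1 : v⁻¹ q.1 < n := hvinv q.1 (by omega)
        have hvq2 : v⁻¹ q.2 < n := hvinv q.2 h3
        have horder : v⁻¹ q.2 < v⁻¹ q.1 := by
          rcases lt_trichotomy (v⁻¹ q.2) (v⁻¹ q.1) with h | h | h
          · exact h
          · exfalso
            have : q.2 = q.1 := by
              have := congrArg v h
              rwa [Equiv.Perm.coe_inv, Equiv.apply_symm_apply, Equiv.apply_symm_apply] at this
            omega
          · exfalso
            have hd := hdec (v⁻¹ q.1) (v⁻¹ q.2) h hvq2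
            simp only [Equiv.Perm.mul_apply, Equiv.Perm.coe_inv, Equiv.apply_symm_apply] at hd
            omega
        refine ⟨(v⁻¹ q.2, v⁻¹ q.1), ?_, ?_⟩
        · simp only [Finset.coe_filter, Set.mem_setOf_eq, hL, hmemT]
          refine ⟨⟨by omega, by omega⟩, by omega, horder, ?_⟩
          simp only [Equiv.Perm.coe_inv, Equiv.apply_symm_apply]
          omega
        · simp only [Equiv.Perm.coe_inv, Equiv.apply_symm_apply]
    have hkey : A'.card = L.card + A.card := by
      rw [hLcard]
      exact (Finset.card_sdiff_add_card_eq_card hAsub).symm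
    rw [hsw, hsw', hsv, Finset.card_union_of_disjoint hdisjAM,
      Finset.card_union_of_disjoint hdisjAM', hkey, hMM]
    ring
end
end

section
/- The quotient ring $H_n = \mathbb{Z}[X_1,\ldots,X_n]/\langle e_1,\ldots,e_n\rangle$ is a free $\mathbb{Z}$-module with basis the classes of monomials $X_1^{k_1} X_2^{k_2}\cdots X_n^{k_n}$ with $0 \le k_i \le n-i$ for all $i$. -/
open MvPolynomial

noncomputable section

namespace CoinvAux

abbrev A (n : ℕ) := MvPolynomial (Fin n) ℤ

abbrev rho (n : ℕ) : A n →+* A (n+1) := (rename (Fin.succ : Fin n → Fin (n+1))).toRingHom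

def E (n : ℕ) (b : Fin n → ℕ) : A n := ∏ i : Fin n, esymm (Fin n) ℤ ((i : ℕ) + 1) ^ b i

def Xp (n : ℕ) (k : Fin n → ℕ) : A n := ∏ i : Fin n, X i ^ k i

def Kp (n : ℕ) := {k : Fin n → ℕ // ∀ i : Fin n, k i ≤ n - 1 - (i : ℕ)}

instance (n : ℕ) : DecidableEq (Kp n) := fun a b =>
  decidable_of_iff (a.1 = b.1) ⟨Subtype.ext, congrArg _⟩

instance (n : ℕ) : Fintype (Kp n) :=
  Fintype.ofInjective (fun k : Kp n => fun i : Fin n => (⟨k.1 i, by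
    have := k.2 i; omega⟩ : Fin (n + 1))) (by
      intro a b hab
      apply Subtype.ext; funext i
      have := congrFun hab i
      simpa [Fin.ext_iff] using this)

def fam (n : ℕ) : ((Fin n → ℕ) × Kp n) → A n := fun p => E n p.1 * Xp n p.2.1

def headK {n : ℕ} (κ : Kp (n+1)) : Fin (n+1) := ⟨κ.1 0, by have := κ.2 0; omega⟩

def tailK {n : ℕ} (κ : Kp (n+1)) : Kp n :=
  ⟨fun i => κ.1 i.succ, fun i => by have := κ.2 i.succ; simp at this ⊢; omega⟩

def glueK {n : ℕ} (j : Fin (n+1)) (k : Kp n) : Kp (n+1) :=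
  ⟨Fin.cons (j : ℕ) k.1, by
    intro i
    refine Fin.cases ?_ (fun i' => ?_) i
    · simpa using by omega
    · have := k.2 i'
      simp only [Fin.cons_succ]
      simp at this ⊢
      omega⟩

lemma glue_head_tail {n : ℕ} (κ : Kp (n+1)) : glueK (headK κ) (tailK κ) = κ := by
  apply Subtype.ext
  funext i
  refine Fin.cases ?_ (fun i' => ?_) i
  · simp [glueK, headK]
  · simp [glueK, tailK]

lemma esymm_eq_zero_of_card_lt {n k : ℕ} (h : n < k) : esymm (Fin n) ℤ k = 0 := by
  rw [esymm, Finset.powersetCard_eq_empty.2 (by simpa using h)]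
  simp

lemma E_add (n : ℕ) (b b' : Fin n → ℕ) : E n (b + b') = E n b * E n b' := by
  simp [E, pow_add, Finset.prod_mul_distrib]

lemma E_zero (n : ℕ) : E n 0 = 1 := by simp [E]

lemma E_single (n : ℕ) (i : Fin n) : E n (Pi.single i 1) = esymm (Fin n) ℤ ((i : ℕ) + 1) := by
  rw [E, Finset.prod_eq_single i]
  · simp
  · intro j _ hj; simp [Pi.single_apply, hj]
  · simp

lemma esymm_mul_E (n : ℕ) (i : Fin n) (b : Fin n → ℕ) :
    esymm (Fin n) ℤ ((i : ℕ) + 1) * E n b = E n (b + Pi.single i 1) := by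
  rw [E_add, E_single, mul_comm]

lemma x_pow_eq (n : ℕ) :
    (X 0 : A (n+1)) ^ (n + 1) =
      ∑ j ∈ Finset.range (n + 1),
        (-1 : A (n+1)) ^ j * (esymm (Fin (n+1)) ℤ (j + 1) * X 0 ^ (n - j)) := by
  classical
  set x : A (n+1) := X 0 with hx
  let s : Multiset (A (n+1)) := Finset.univ.val.map X
  have hcard : Multiset.card s = n + 1 := by simp [s]
  have h := congrArg (Polynomial.eval x) (Multiset.prod_X_sub_X_eq_sum_esymm s)
  rw [Polynomial.eval_multiset_prod, Polynomial.eval_finset_sum] at h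
  have hzero : ((s.map fun t => Polynomial.X - Polynomial.C t).map (Polynomial.eval x)).prod = 0 := by
    apply Multiset.prod_eq_zero
    simp only [Multiset.map_map, Multiset.mem_map, Function.comp_apply]
    exact ⟨x, by simp [s, hx], by simp⟩
  rw [hzero] at h
  have hesymm : ∀ j, s.esymm j = esymm (Fin (n+1)) ℤ j := by
    intro j; rw [esymm_eq_multiset_esymm]
  simp only [Polynomial.eval_mul, Polynomial.eval_pow, Polynomial.eval_neg, Polynomial.eval_one,
    Polynomial.eval_C, Polynomial.eval_X, hcard, hesymm] at h
  rw [Finset.sum_range_succ'] at h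
  simp only [esymm_zero, Nat.sub_zero, pow_zero, one_mul, Nat.succ_sub_succ] at h
  have h2 : x ^ (n + 1) = -∑ k ∈ Finset.range (n + 1),
      (-1 : A (n+1)) ^ (k+1) * (esymm (Fin (n+1)) ℤ (k + 1) * x ^ (n - k)) :=
    eq_neg_of_add_eq_zero_right h.symm
  rw [h2, ← Finset.sum_neg_distrib]
  refine Finset.sum_congr rfl fun k _ => ?_
  rw [pow_succ]
  ring

lemma esymm_rec (n : ℕ) {k : ℕ} (hk1 : 1 ≤ k) (hk2 : k ≤ n + 1) :
    esymm (Fin (n+1)) ℤ k =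
      rho n (esymm (Fin n) ℤ k) + X 0 * rho n (esymm (Fin n) ℤ (k-1)) := by
  classical
  set S : Polynomial (A n) := ∏ i : Fin n, (Polynomial.X + Polynomial.C (X i)) with hS
  set T : Polynomial (A (n+1)) := Polynomial.map (rho n) S with hT
  have h1 : (∏ i : Fin (n+1), (Polynomial.X + Polynomial.C (X i))) =
      (Polynomial.X + Polynomial.C (X 0)) * T := by
    rw [Fin.prod_univ_succ]
    congr 1
    rw [hT, hS, Polynomial.map_prod]
    refine Finset.prod_congr rfl fun i _ => ?_
    simp [Polynomial.map_add]
  have hP := MvPolynomial.prod_X_add_C_coeff ℤ (σ := Fin (n+1)) (n + 1 - k)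
    (by simpa using by omega)
  rw [h1] at hP
  have hcard : Fintype.card (Fin (n+1)) = n + 1 := by simp
  rw [hcard] at hP
  have harith : n + 1 - (n + 1 - k) = k := by omega
  rw [harith] at hP
  rw [add_mul, Polynomial.coeff_add, Polynomial.coeff_C_mul] at hP
  have hTc : ∀ m : ℕ, m ≤ n → T.coeff m = rho n (esymm (Fin n) ℤ (n - m)) := by
    intro m hm
    rw [hT, Polynomial.coeff_map, hS]
    congr 1
    have := MvPolynomial.prod_X_add_C_coeff ℤ (σ := Fin n) m (by simpa using hm)
    rw [Fintype.card_fin] at this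
    exact this
  rcases Nat.lt_or_ge k (n+1) with hkn | hkn
  · have hkn' : k ≤ n := by omega
    have e1 : (Polynomial.X * T).coeff (n + 1 - k) = T.coeff (n - k) := by
      have : n + 1 - k = (n - k) + 1 := by omega
      rw [this, Polynomial.coeff_X_mul]
    rw [e1, hTc (n - k) (by omega), hTc (n + 1 - k) (by omega)] at hP
    have a1 : n - (n - k) = k := by omega
    have a2 : n - (n + 1 - k) = k - 1 := by omega
    rw [a1, a2] at hP
    rw [← hP]
  · have hk : k = n + 1 := by omega
    subst hk
    simp only [Nat.sub_self] at hP
    rw [Polynomial.mul_coeff_zero, Polynomial.coeff_X_zero, zero_mul, zero_add] at hP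
    rw [hTc 0 (by omega)] at hP
    have : esymm (Fin n) ℤ (n + 1) = 0 := by
      rw [esymm, Finset.powersetCard_eq_empty.2 (by simp)]
      simp
    rw [this, map_zero, zero_add, Nat.add_sub_cancel]
    rw [← hP, Nat.sub_zero]

lemma mul_mem_span_image {B : Type*} [CommRing B] (S : Set B) (c v : B)
    (hv : v ∈ Submodule.span ℤ S) :
    v * c ∈ Submodule.span ℤ ((fun z => z * c) '' S) := by
  have h : v * c ∈ Submodule.map (LinearMap.mulRight ℤ c) (Submodule.span ℤ S) :=
    ⟨v, hv, rfl⟩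
  rwa [Submodule.map_span] at h

lemma finSuccEquiv_rho (n : ℕ) (p : A n) :
    finSuccEquiv ℤ n (rho n p) = Polynomial.C p := by
  have : (finSuccEquiv ℤ n).toAlgHom.comp (rename (Fin.succ : Fin n → Fin (n+1))) =
      (Polynomial.CAlgHom : A n →ₐ[ℤ] Polynomial (A n)) := by
    apply MvPolynomial.algHom_ext
    intro i
    simp [Polynomial.CAlgHom, finSuccEquiv_X_succ]
  have h := congrArg (fun (g : A n →ₐ[ℤ] Polynomial (A n)) => g p) this
  simpa [Polynomial.CAlgHom] using h

lemma monomial_factor (n : ℕ) (d : Fin (n+1) →₀ ℕ) (c : ℤ) :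
    monomial d c = (X 0 : A (n+1)) ^ (d 0) * rho n (monomial (Finsupp.tail d) c) := by
  have hd : (Finsupp.single (0 : Fin (n+1)) (d 0)) + Finsupp.mapDomain Fin.succ d.tail = d := by
    apply Finsupp.ext
    intro i
    rw [Finsupp.add_apply]
    refine Fin.cases ?_ (fun j => ?_) i
    · rw [Finsupp.mapDomain_notin_range]
      · simp
      · rintro ⟨j, hj⟩
        exact Fin.succ_ne_zero j hj
    · rw [Finsupp.mapDomain_apply (Fin.succ_injective n), Finsupp.tail_apply]
      rw [Finsupp.single_apply, if_neg (by exact fun h => (Fin.succ_ne_zero j) h.symm)]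
      simp
  rw [X_pow_eq_monomial]
  show _ = _ * rename Fin.succ (monomial (Finsupp.tail d) c)
  rw [rename_monomial, monomial_mul, one_mul, hd]

/-- Spanning: if `f` spans `A n` then `rho (f i) * X 0 ^ m` spans `A (n+1)`. -/
lemma span_polyExt {n : ℕ} {ι : Type*} (f : ι → A n)
    (hf : Submodule.span ℤ (Set.range f) = ⊤) :
    Submodule.span ℤ (Set.range fun p : ι × ℕ => rho n (f p.1) * (X 0 : A (n+1)) ^ p.2) = ⊤ := by
  rw [eq_top_iff]
  intro p _
  have hmono : ∀ (d : Fin (n+1) →₀ ℕ) (c : ℤ), (monomial d c : A (n+1)) ∈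
      Submodule.span ℤ (Set.range fun p : ι × ℕ => rho n (f p.1) * (X 0 : A (n+1)) ^ p.2) := by
    intro d c
    rw [monomial_factor]
    have h1 : (monomial (Finsupp.tail d) c : A n) ∈ Submodule.span ℤ (Set.range f) := by
      rw [hf]; trivial
    have h2 : rho n (monomial (Finsupp.tail d) c) ∈
        Submodule.span ℤ (Set.range fun i => rho n (f i)) := by
      have := Submodule.map_span ((rho n).toIntAlgHom.toLinearMap) (Set.range f)
      have hmem : rho n (monomial (Finsupp.tail d) c) ∈
          Submodule.map ((rho n).toIntAlgHom.toLinearMap) (Submodule.span ℤ (Set.range f)) :=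
        ⟨_, h1, rfl⟩
      rw [this] at hmem
      rw [← Set.range_comp] at hmem
      exact hmem
    have h3 := mul_mem_span_image _ ((X 0 : A (n+1)) ^ (d 0)) _ h2
    rw [mul_comm]
    refine Submodule.span_le.2 ?_ h3
    rintro z ⟨w, ⟨i, rfl⟩, rfl⟩
    exact Submodule.subset_span ⟨(i, d 0), rfl⟩
  have := p.support_sum_monomial_coeff
  rw [← this]
  exact Submodule.sum_mem _ fun d _ => hmono d _

/-- Independence transfer. -/
lemma li_polyExt {n : ℕ} {ι : Type*} (f : ι → A n) (hf : LinearIndependent ℤ f) :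
    LinearIndependent ℤ (fun p : ι × ℕ => rho n (f p.1) * (X 0 : A (n+1)) ^ p.2) := by
  classical
  rw [linearIndependent_iff']
  intro s g hsum p0 hp0
  have h2 : (∑ p ∈ s, g p • (Polynomial.C (f p.1) * Polynomial.X ^ p.2 :
      Polynomial (A n))) = 0 := by
    have := congrArg (finSuccEquiv ℤ n) hsum
    rw [map_sum, map_zero] at this
    rw [← this]
    refine Finset.sum_congr rfl fun p _ => ?_
    rw [map_zsmul, map_mul, map_pow, finSuccEquiv_rho, finSuccEquiv_X_zero]
  have h3 : (∑ p ∈ s, g p • (Polynomial.C (f p.1) * Polynomial.X ^ p.2 :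
      Polynomial (A n))).coeff p0.2 = 0 := by rw [h2]; simp
  rw [Polynomial.finset_sum_coeff] at h3
  simp only [Polynomial.coeff_smul, Polynomial.coeff_C_mul, Polynomial.coeff_X_pow] at h3
  have h4 : ∑ p ∈ s.filter (fun p => p.2 = p0.2), g p • f p.1 = 0 := by
    rw [← h3, Finset.sum_filter]
    refine Finset.sum_congr rfl fun p _ => ?_
    by_cases h : p.2 = p0.2
    · simp [h, smul_eq_mul]
    · simp [Ne.symm h, h]
  have h5 : ∑ i ∈ (s.filter (fun p => p.2 = p0.2)).image Prod.fst,
      g (i, p0.2) • f i = 0 := by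
    rw [Finset.sum_image ?_]
    · rw [← h4]
      refine Finset.sum_congr rfl fun p hp => ?_
      simp only [Finset.mem_filter] at hp
      rw [← hp.2]
    · intro a ha b hb hab
      simp only [Finset.mem_coe, Finset.mem_filter] at ha hb
      exact Prod.ext hab (ha.2.trans hb.2.symm)
  have := linearIndependent_iff'.1 hf _ _ h5 p0.1
    (Finset.mem_image.2 ⟨p0, Finset.mem_filter.2 ⟨hp0, rfl⟩, rfl⟩)
  simpa using this


lemma span_mul_closed {B : Type*} [CommRing B] {S : Set B} {c : B}
    (h : ∀ z ∈ S, c * z ∈ Submodule.span ℤ S) :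
    ∀ v ∈ Submodule.span ℤ S, c * v ∈ Submodule.span ℤ S := by
  intro v hv
  have h2 := mul_mem_span_image S c v hv
  rw [mul_comm]
  refine Submodule.span_le.2 ?_ h2
  rintro z ⟨w, hw, rfl⟩
  dsimp only
  rw [mul_comm]
  exact h w hw

lemma pow_mul_mem {B : Type*} [CommRing B] (N : Submodule ℤ B) {c : B}
    (hc : ∀ v ∈ N, c * v ∈ N) (m : ℕ) : ∀ v ∈ N, c ^ m * v ∈ N := by
  induction m with
  | zero => simpa using fun v hv => hv
  | succ m ih =>
      intro v hv
      rw [pow_succ, mul_comm (c ^ m) c, mul_assoc]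
      exact hc _ (ih v hv)

lemma prod_pow_mul_mem {B : Type*} [CommRing B] (N : Submodule ℤ B) {ι : Type*}
    [DecidableEq ι] (s : Finset ι) (c : ι → B)
    (hc : ∀ i ∈ s, ∀ v ∈ N, c i * v ∈ N) (b : ι → ℕ) :
    ∀ v ∈ N, (∏ i ∈ s, c i ^ b i) * v ∈ N := by
  induction s using Finset.induction with
  | empty => simpa using fun v hv => hv
  | @insert a s hnotmem ih =>
      intro v hv
      rw [Finset.prod_insert hnotmem, mul_assoc]
      exact pow_mul_mem N (hc a (Finset.mem_insert_self a s)) (b a) _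
        (ih (fun i hi => hc i (Finset.mem_insert_of_mem hi)) v hv)

section Step

variable (n : ℕ)

def S1 : Set (A (n+1)) :=
  Set.range (fun p : (Fin (n+1) → ℕ) × Fin (n+1) =>
    E (n+1) p.1 * (X 0 : A (n+1)) ^ ((p.2 : ℕ)))

def S2 : Set (A (n+1)) :=
  Set.range (fun p : (Fin n → ℕ) × ℕ =>
    rho n (E n p.1) * (X 0 : A (n+1)) ^ p.2)

lemma one_mem_spanS1 : (1 : A (n+1)) ∈ Submodule.span ℤ (S1 n) := by
  apply Submodule.subset_span
  exact ⟨(0, 0), by simp [E_zero]⟩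

lemma one_mem_spanS2 : (1 : A (n+1)) ∈ Submodule.span ℤ (S2 n) := by
  apply Submodule.subset_span
  exact ⟨(0, 0), by simp [E_zero]⟩

lemma neg_pow_smul {B : Type*} [CommRing B] (k : ℕ) (w : B) :
    (-1 : B) ^ k * w = ((-1 : ℤ) ^ k) • w := by
  rw [zsmul_eq_mul]
  push_cast
  ring

lemma x_mul_spanS1 : ∀ v ∈ Submodule.span ℤ (S1 n),
    (X 0 : A (n+1)) * v ∈ Submodule.span ℤ (S1 n) := by
  apply span_mul_closed
  rintro z ⟨⟨b, j⟩, rfl⟩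
  rcases Nat.lt_or_ge (j : ℕ) n with hj | hj
  · apply Submodule.subset_span
    refine ⟨(b, ⟨(j : ℕ) + 1, by omega⟩), ?_⟩
    simp [pow_succ]
    ring
  · have hjn : (j : ℕ) = n := by omega
    have : (X 0 : A (n+1)) * (E (n+1) b * X 0 ^ (j : ℕ)) = E (n+1) b * X 0 ^ (n+1) := by
      rw [hjn]; ring
    rw [this, x_pow_eq, Finset.mul_sum]
    refine Submodule.sum_mem _ fun k hk => ?_
    rw [Finset.mem_range] at hk
    have heq : E (n+1) b * ((-1 : A (n+1)) ^ k *
        (esymm (Fin (n+1)) ℤ (k + 1) * X 0 ^ (n - k))) =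
        ((-1 : ℤ) ^ k) • (E (n+1) (b + Pi.single ⟨k, by omega⟩ 1) * X 0 ^ (n - k)) := by
      rw [← neg_pow_smul]
      have : esymm (Fin (n+1)) ℤ (k + 1) * E (n+1) b
          = E (n+1) (b + Pi.single ⟨k, by omega⟩ 1) := by
        have := esymm_mul_E (n+1) ⟨k, by omega⟩ b
        simpa using this
      rw [← this]
      ring
    rw [heq]
    exact Submodule.smul_mem _ _ (Submodule.subset_span ⟨(_, ⟨n - k, by omega⟩), rfl⟩)

lemma e_mul_spanS1 (i : Fin (n+1)) : ∀ v ∈ Submodule.span ℤ (S1 n),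
    esymm (Fin (n+1)) ℤ ((i : ℕ) + 1) * v ∈ Submodule.span ℤ (S1 n) := by
  apply span_mul_closed
  rintro z ⟨⟨b, j⟩, rfl⟩
  apply Submodule.subset_span
  refine ⟨(b + Pi.single i 1, j), ?_⟩
  dsimp only
  rw [← esymm_mul_E]
  ring

lemma e'_mul_spanS1 : ∀ k : ℕ, k ≤ n + 1 → ∀ v ∈ Submodule.span ℤ (S1 n),
    rho n (esymm (Fin n) ℤ k) * v ∈ Submodule.span ℤ (S1 n) := by
  intro k
  induction k with
  | zero => intro _ v hv; simpa [esymm_zero] using hv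
  | succ k ih =>
      intro hk v hv
      have hrec := esymm_rec n (k := k + 1) (by omega) (by omega)
      simp only [Nat.add_sub_cancel] at hrec
      have h1 : rho n (esymm (Fin n) ℤ (k+1)) * v =
          esymm (Fin (n+1)) ℤ (k+1) * v - X 0 * (rho n (esymm (Fin n) ℤ k) * v) := by
        rw [hrec]; ring
      rw [h1]
      refine Submodule.sub_mem _ ?_ ?_
      · have := e_mul_spanS1 n ⟨k, by omega⟩ v hv
        simpa using this
      · exact x_mul_spanS1 n _ (ih (by omega) v hv)

lemma EX'_mem_spanS1 (a : Fin n → ℕ) (m : ℕ) :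
    rho n (E n a) * (X 0 : A (n+1)) ^ m ∈ Submodule.span ℤ (S1 n) := by
  have hx : (X 0 : A (n+1)) ^ m ∈ Submodule.span ℤ (S1 n) := by
    have := pow_mul_mem _ (x_mul_spanS1 n) m 1 (one_mem_spanS1 n)
    simpa using this
  have hE : rho n (E n a) = ∏ i : Fin n, (rho n (esymm (Fin n) ℤ ((i : ℕ) + 1))) ^ a i := by
    rw [E, map_prod]
    exact Finset.prod_congr rfl fun i _ => by rw [map_pow]
  rw [hE]
  exact prod_pow_mul_mem _ (Finset.univ : Finset (Fin n))
    (fun i => rho n (esymm (Fin n) ℤ ((i : ℕ) + 1)))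
    (fun i _ => e'_mul_spanS1 n ((i : ℕ) + 1) (by have := i.isLt; omega)) a _ hx

lemma x_mul_spanS2 : ∀ v ∈ Submodule.span ℤ (S2 n),
    (X 0 : A (n+1)) * v ∈ Submodule.span ℤ (S2 n) := by
  apply span_mul_closed
  rintro z ⟨⟨a, m⟩, rfl⟩
  apply Submodule.subset_span
  refine ⟨(a, m + 1), ?_⟩
  dsimp only
  rw [pow_succ]
  ring

lemma e'_mul_spanS2 : ∀ k : ℕ, k ≤ n + 1 → ∀ v ∈ Submodule.span ℤ (S2 n),
    rho n (esymm (Fin n) ℤ k) * v ∈ Submodule.span ℤ (S2 n) := by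
  intro k hk
  rcases Nat.lt_or_ge n k with hkn | hkn
  · -- k = n+1 : esymm vanishes
    intro v hv
    rw [esymm_eq_zero_of_card_lt hkn, map_zero, zero_mul]
    exact Submodule.zero_mem _
  · rcases Nat.eq_zero_or_pos k with rfl | hk0
    · intro v hv; simpa [esymm_zero] using hv
    · apply span_mul_closed
      rintro z ⟨⟨a, m⟩, rfl⟩
      apply Submodule.subset_span
      refine ⟨(a + Pi.single ⟨k - 1, by omega⟩ 1, m), ?_⟩
      have : esymm (Fin n) ℤ k * E n a = E n (a + Pi.single ⟨k - 1, by omega⟩ 1) := by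
        have := esymm_mul_E n ⟨k - 1, by omega⟩ a
        have harith : (k - 1) + 1 = k := by omega
        rw [harith] at this
        exact this
      dsimp only
      rw [← this, map_mul]
      ring

lemma e_mul_spanS2 (i : Fin (n+1)) : ∀ v ∈ Submodule.span ℤ (S2 n),
    esymm (Fin (n+1)) ℤ ((i : ℕ) + 1) * v ∈ Submodule.span ℤ (S2 n) := by
  intro v hv
  have hrec := esymm_rec n (k := (i : ℕ) + 1) (by omega) (by omega)
  simp only [Nat.add_sub_cancel] at hrec
  have h1 : esymm (Fin (n+1)) ℤ ((i : ℕ)+1) * v =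
      rho n (esymm (Fin n) ℤ ((i : ℕ)+1)) * v +
        X 0 * (rho n (esymm (Fin n) ℤ (i : ℕ)) * v) := by
    rw [hrec]; ring
  rw [h1]
  refine Submodule.add_mem _ ?_ ?_
  · exact e'_mul_spanS2 n _ (by omega) v hv
  · exact x_mul_spanS2 n _ (e'_mul_spanS2 n _ (by omega) v hv)

lemma EX_mem_spanS2 (b : Fin (n+1) → ℕ) (j : ℕ) :
    E (n+1) b * (X 0 : A (n+1)) ^ j ∈ Submodule.span ℤ (S2 n) := by
  have hx : (X 0 : A (n+1)) ^ j ∈ Submodule.span ℤ (S2 n) := by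
    have := pow_mul_mem _ (x_mul_spanS2 n) j 1 (one_mem_spanS2 n)
    simpa using this
  rw [E]
  exact prod_pow_mul_mem _ (Finset.univ : Finset (Fin (n+1)))
    (fun i => esymm (Fin (n+1)) ℤ ((i : ℕ) + 1))
    (fun i _ => e_mul_spanS2 n i) b _ hx

/-- Linear independence of the monomials in the elementary symmetric polynomials. -/
lemma liE : LinearIndependent ℤ (fun b : Fin (n+1) → ℕ => E (n+1) b) := by
  classical
  -- the injective algebra morphism sending the i-th variable to `esymm (i+1)`
  let ψ : MvPolynomial (Fin (n+1)) ℤ →ₐ[ℤ] A (n+1) :=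
    (Subalgebra.val _).comp (esymmAlgHom (Fin (n+1)) ℤ (n+1))
  have hψ : Function.Injective ψ := by
    refine Function.Injective.comp (g := (Subalgebra.val _ : _ →ₐ[ℤ] _)) ?_ ?_
    · exact Subtype.val_injective
    · exact esymmAlgHom_fin_injective ℤ le_rfl
  have hbase : LinearIndependent ℤ
      (fun b : Fin (n+1) → ℕ =>
        (monomial (Finsupp.equivFunOnFinite.symm b) (1 : ℤ) : MvPolynomial (Fin (n+1)) ℤ)) := by
    have h1 := (MvPolynomial.basisMonomials (Fin (n+1)) ℤ).linearIndependent
    exact h1.comp (Finsupp.equivFunOnFinite.symm) (Equiv.injective _)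
  have := hbase.map' ψ.toLinearMap (LinearMap.ker_eq_bot.2 hψ)
  convert this using 1
  funext b
  show E (n+1) b = ψ (monomial (Finsupp.equivFunOnFinite.symm b) 1)
  have : ψ (monomial (Finsupp.equivFunOnFinite.symm b) 1) =
      aeval (R := ℤ) (fun i : Fin (n+1) => esymm (Fin (n+1)) ℤ ((i : ℕ) + 1))
        (monomial (Finsupp.equivFunOnFinite.symm b) 1) := by
    show ((esymmAlgHom (Fin (n+1)) ℤ (n+1)) (monomial (Finsupp.equivFunOnFinite.symm b) 1)).val = _
    rw [esymmAlgHom_apply]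
  rw [this, aeval_monomial, map_one, one_mul, Finsupp.prod_fintype]
  · rfl
  · intro i; exact pow_zero _
  all_goals rfl

/-- Stage 2: independence of `E b * X 0 ^ j` for `j ≤ n`, via the distinct-roots argument. -/
lemma li_Ex : LinearIndependent ℤ
    (fun p : (Fin (n+1) → ℕ) × Fin (n+1) =>
      E (n+1) p.1 * (X 0 : A (n+1)) ^ ((p.2 : ℕ))) := by
  classical
  rw [linearIndependent_iff']
  intro s g hsum p0 hp0
  set q : Fin (n+1) → A (n+1) :=
    fun j => ∑ p ∈ s.filter (fun p => p.2 = j), g p • E (n+1) p.1 with hq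
  -- the combination rearranged by powers of X 0
  have hq0 : ∑ j : Fin (n+1), q j * (X 0 : A (n+1)) ^ (j : ℕ) = 0 := by
    have hfib : ∑ j : Fin (n+1), ∑ p ∈ s.filter (fun p => p.2 = j),
        g p • (E (n+1) p.1 * (X 0 : A (n+1)) ^ ((p.2 : ℕ))) =
        ∑ p ∈ s, g p • (E (n+1) p.1 * (X 0 : A (n+1)) ^ ((p.2 : ℕ))) := by
      have := Finset.sum_fiberwise_eq_sum_filter s Finset.univ (fun p => p.2)
        (fun p => g p • (E (n+1) p.1 * (X 0 : A (n+1)) ^ ((p.2 : ℕ))))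
      simpa using this
    rw [← hsum, ← hfib]
    refine Finset.sum_congr rfl fun j _ => ?_
    rw [hq, Finset.sum_mul]
    refine Finset.sum_congr rfl fun p hp => ?_
    rw [Finset.mem_filter] at hp
    rw [smul_mul_assoc, hp.2]
  -- symmetrize: the same identity with X i in place of X 0
  have hqi : ∀ i : Fin (n+1), ∑ j : Fin (n+1), q j * (X i : A (n+1)) ^ (j : ℕ) = 0 := by
    intro i
    have happ := congrArg (rename (Equiv.swap (0 : Fin (n+1)) i)) hq0
    rw [map_sum, map_zero] at happ
    rw [← happ]
    refine Finset.sum_congr rfl fun j _ => ?_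
    rw [map_mul, map_pow, rename_X, Equiv.swap_apply_left]
    congr 1
    rw [hq, map_sum]
    refine Finset.sum_congr rfl fun p _ => ?_
    rw [map_zsmul]
    congr 1
    rw [E, map_prod]
    refine Finset.prod_congr rfl fun i' _ => ?_
    rw [map_pow, rename_esymm]
  -- assemble into a polynomial with too many roots
  set F : Polynomial (A (n+1)) :=
    ∑ j : Fin (n+1), Polynomial.C (q j) * Polynomial.X ^ (j : ℕ) with hF
  have heval : ∀ i : Fin (n+1), F.eval (X i) = 0 := by
    intro i
    rw [hF, Polynomial.eval_finset_sum]
    simpa using hqi i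
  have hdeg : F.natDegree < Fintype.card (Fin (n+1)) := by
    rw [Fintype.card_fin]
    refine lt_of_le_of_lt (Polynomial.natDegree_sum_le_of_forall_le _ _ fun j _ => ?_)
      (Nat.lt_succ_self n)
    exact (Polynomial.natDegree_C_mul_X_pow_le _ _).trans (by omega)
  have hFzero : F = 0 :=
    Polynomial.eq_zero_of_natDegree_lt_card_of_eval_eq_zero F
      (MvPolynomial.X_injective) heval hdeg
  -- extract coefficients
  have hqzero : ∀ j : Fin (n+1), q j = 0 := by
    intro j
    have : F.coeff (j : ℕ) = 0 := by rw [hFzero]; simp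
    rw [hF, Polynomial.finset_sum_coeff] at this
    simp only [Polynomial.coeff_C_mul, Polynomial.coeff_X_pow] at this
    rw [Finset.sum_eq_single j] at this
    · simpa using this
    · intro j' _ hj'
      rw [if_neg (by simpa [Fin.val_eq_val] using Ne.symm hj'), mul_zero]
    · intro h; exact absurd (Finset.mem_univ j) h
  -- conclude using independence of the E-monomials
  have hq0' := hqzero p0.2
  rw [hq] at hq0'
  have h5 : ∑ i ∈ (s.filter (fun p => p.2 = p0.2)).image Prod.fst,
      g (i, p0.2) • E (n+1) i = 0 := by
    rw [Finset.sum_image ?_]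
    · rw [← hq0']
      refine Finset.sum_congr rfl fun p hp => ?_
      simp only [Finset.mem_filter] at hp
      rw [← hp.2]
    · intro a ha b hb hab
      simp only [Finset.mem_coe, Finset.mem_filter] at ha hb
      exact Prod.ext hab (ha.2.trans hb.2.symm)
  have := linearIndependent_iff'.1 (liE n) _ _ h5 p0.1
    (Finset.mem_image.2 ⟨p0, Finset.mem_filter.2 ⟨hp0, rfl⟩, rfl⟩)
  simpa using this

lemma Xp_glue (j : Fin (n+1)) (k' : Kp n) :
    Xp (n+1) (glueK j k').1 = (X 0 : A (n+1)) ^ (j : ℕ) * rho n (Xp n k'.1) := by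
  have h2 : rho n (Xp n k'.1) = ∏ i : Fin n, (X i.succ : A (n+1)) ^ k'.1 i := by
    show rename Fin.succ (Xp n k'.1) = _
    rw [Xp, map_prod]
    exact Finset.prod_congr rfl fun i _ => by rw [map_pow, rename_X]
  have e0 : (glueK j k').1 0 = (j : ℕ) := by simp [glueK]
  have es : ∀ i : Fin n, (glueK j k').1 i.succ = k'.1 i := fun i => by simp [glueK]
  rw [Xp, Fin.prod_univ_succ, h2, e0]
  simp only [es]

lemma fam_glue (b : Fin (n+1) → ℕ) (j : Fin (n+1)) (k' : Kp n) :
    fam (n+1) (b, glueK j k') =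
      (E (n+1) b * (X 0 : A (n+1)) ^ (j : ℕ)) * rho n (Xp n k'.1) := by
  show E (n+1) b * Xp (n+1) (glueK j k').1 = _
  rw [Xp_glue]
  ring

lemma fam_split (b : Fin (n+1) → ℕ) (κ : Kp (n+1)) :
    fam (n+1) (b, κ) =
      (E (n+1) b * (X 0 : A (n+1)) ^ ((headK κ : ℕ))) * rho n (Xp n (tailK κ).1) := by
  conv_lhs => rw [← glue_head_tail κ]
  rw [fam_glue]

end Step

lemma partition_zero {M ι κ : Type*} [AddCommGroup M] [Module ℤ M] [Fintype κ]
    [DecidableEq κ] (B : Module.Basis ι ℤ M) (π : ι → κ) (z : κ → M)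
    (hz : ∀ j, z j ∈ Submodule.span ℤ (B '' {i | π i = j}))
    (hsum : ∑ j, z j = 0) (j0 : κ) : z j0 = 0 := by
  classical
  have hsupp : ∀ j, ↑(B.repr (z j)).support ⊆ {i | π i = j} :=
    fun j => B.repr_support_subset_of_mem_span _ (hz j)
  have hz0 : B.repr (z j0) = 0 := by
    ext idx
    simp only [Finsupp.coe_zero, Pi.zero_apply]
    by_cases hidx : π idx = j0
    · have h1 : ∑ j, (B.repr (z j)) idx = 0 := by
        have := congrArg (fun m => (B.repr m) idx) hsum
        simp only [map_zero, Finsupp.coe_zero, Pi.zero_apply, map_sum] at this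
        rw [← this, Finsupp.finset_sum_apply]
      rw [Finset.sum_eq_single j0] at h1
      · exact h1
      · intro j _ hj
        by_contra hne
        have hmem : idx ∈ (B.repr (z j)).support := Finsupp.mem_support_iff.2 hne
        have := hsupp j hmem
        simp only [Set.mem_setOf_eq] at this
        exact hj (by rw [← this, hidx])
      · intro h; exact absurd (Finset.mem_univ j0) h
    · by_contra hne
      have hmem : idx ∈ (B.repr (z j0)).support := Finsupp.mem_support_iff.2 hne
      exact hidx (hsupp j0 hmem)
  exact (LinearEquiv.map_eq_zero_iff B.repr).1 hz0

theorem main (n : ℕ) : LinearIndependent ℤ (fam n) ∧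
    Submodule.span ℤ (Set.range (fam n)) = ⊤ := by
  induction n with
  | zero =>
      have hone : ∀ p : (Fin 0 → ℕ) × Kp 0, fam 0 p = 1 := by
        intro p
        show E 0 p.1 * Xp 0 p.2.1 = 1
        simp [E, Xp]
      have hsub : Subsingleton ((Fin 0 → ℕ) × Kp 0) := by
        constructor
        rintro ⟨a, k⟩ ⟨a', k'⟩
        have h1 : a = a' := funext fun i => i.elim0
        have h2 : k = k' := Subtype.ext (funext fun i => i.elim0)
        rw [h1, h2]
      constructor
      · rw [linearIndependent_iff']
        intro s g hsum p0 hp0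
        have hs : s = {p0} := by
          apply Finset.eq_singleton_iff_unique_mem.2
          exact ⟨hp0, fun y _ => hsub.allEq y p0⟩
        rw [hs, Finset.sum_singleton, hone] at hsum
        have : MvPolynomial.C (g p0) = (0 : A 0) := by
          rw [← hsum, zsmul_eq_mul, mul_one]
          simp
        have := MvPolynomial.C_injective (Fin 0) ℤ (by simpa using this)
        simpa using this
      · rw [eq_top_iff]
        intro p _
        obtain ⟨c, rfl⟩ := MvPolynomial.C_surjective (Fin 0) p
        have h1 : (MvPolynomial.C c : A 0) = c • fam 0 ⟨fun i => i.elim0, ⟨fun i => i.elim0,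
            fun i => i.elim0⟩⟩ := by
          rw [hone, zsmul_eq_mul, mul_one]
          simp
        rw [h1]
        exact Submodule.smul_mem _ _ (Submodule.subset_span (Set.mem_range_self _))
  | succ n ih =>
      classical
      -- the basis of A (n+1) obtained from the induction hypothesis
      let Bb : Module.Basis (((Fin n → ℕ) × Kp n) × ℕ) ℤ (A (n+1)) :=
        Module.Basis.mk (li_polyExt (fam n) ih.1) (span_polyExt (fam n) ih.2).ge
      have hBb : ∀ idx, Bb idx = rho n (fam n idx.1) * (X 0 : A (n+1)) ^ idx.2 :=
        fun idx => Module.Basis.mk_apply _ _ idx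
      constructor
      · -- linear independence
        rw [linearIndependent_iff']
        intro s g hsum p0 hp0
        set z : Kp n → A (n+1) :=
          fun k' => ∑ p ∈ s.filter (fun p => tailK p.2 = k'), g p • fam (n+1) p with hzdef
        have hzsum : ∑ k' : Kp n, z k' = 0 := by
          rw [← hsum, hzdef]
          have := Finset.sum_fiberwise_eq_sum_filter s Finset.univ (fun p => tailK p.2)
            (fun p => g p • fam (n+1) p)
          simpa using this
        have hzmem : ∀ k' : Kp n, z k' ∈
            Submodule.span ℤ (Bb '' {idx | idx.1.2 = k'}) := by
          intro k'
          rw [hzdef]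
          refine Submodule.sum_mem _ fun p hp => Submodule.smul_mem _ _ ?_
          rw [Finset.mem_filter] at hp
          rw [fam_split n p.1 p.2, hp.2]
          have h1 := EX_mem_spanS2 n p.1 ((headK p.2 : ℕ))
          have h2 := mul_mem_span_image _ (rho n (Xp n k'.1)) _ h1
          refine Submodule.span_le.2 ?_ h2
          rintro w ⟨v, ⟨⟨a, m⟩, rfl⟩, rfl⟩
          apply Submodule.subset_span
          refine ⟨((a, k'), m), rfl, ?_⟩
          rw [hBb]
          show rho n (fam n (a, k')) * (X 0 : A (n+1)) ^ m = _
          show rho n (E n a * Xp n k'.1) * (X 0 : A (n+1)) ^ m = _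
          rw [map_mul]
          ring
        have hz0 := partition_zero Bb (fun idx => idx.1.2) z hzmem hzsum (tailK p0.2)
        -- cancel the common factor rho (Xp (tailK p0.2))
        have hc : rho n (Xp n (tailK p0.2).1) ≠ 0 := by
          have hXp : Xp n (tailK p0.2).1 ≠ 0 := by
            rw [Xp]
            rw [Finset.prod_ne_zero_iff]
            intro i _
            exact pow_ne_zero _ (MvPolynomial.X_ne_zero i)
          intro h
          exact hXp ((map_eq_zero_iff _ (MvPolynomial.rename_injective _
            (Fin.succ_injective n))).1 h)
        have hsum2 : ∑ p ∈ s.filter (fun p => tailK p.2 = tailK p0.2),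
            g p • (E (n+1) p.1 * (X 0 : A (n+1)) ^ ((headK p.2 : ℕ))) = 0 := by
          have hfac : (∑ p ∈ s.filter (fun p => tailK p.2 = tailK p0.2),
              g p • (E (n+1) p.1 * (X 0 : A (n+1)) ^ ((headK p.2 : ℕ)))) *
                rho n (Xp n (tailK p0.2).1) = 0 := by
            rw [Finset.sum_mul]
            rw [hzdef] at hz0
            rw [← hz0]
            refine Finset.sum_congr rfl fun p hp => ?_
            rw [Finset.mem_filter] at hp
            rw [fam_split n p.1 p.2, hp.2, smul_mul_assoc]
          exact (mul_eq_zero.1 hfac).resolve_right hc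
        -- reindex and apply li_Ex
        have h5 : ∑ q ∈ (s.filter (fun p => tailK p.2 = tailK p0.2)).image
            (fun p => (p.1, headK p.2)),
            g (q.1, glueK q.2 (tailK p0.2)) • (E (n+1) q.1 * (X 0 : A (n+1)) ^ ((q.2 : ℕ))) = 0 := by
          rw [Finset.sum_image ?_]
          · rw [← hsum2]
            refine Finset.sum_congr rfl fun p hp => ?_
            rw [Finset.mem_filter] at hp
            congr 2
            rw [← hp.2, glue_head_tail]
          · intro a ha b hb hab
            rw [Finset.mem_coe, Finset.mem_filter] at ha hb
            have hab' : (a.1, headK a.2) = (b.1, headK b.2) := hab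
            obtain ⟨h1, h2⟩ := Prod.mk.inj hab'
            refine Prod.ext h1 ?_
            rw [← glue_head_tail a.2, ← glue_head_tail b.2, h2, ha.2, hb.2]
        have h6 := linearIndependent_iff'.1 (li_Ex n) _ _ h5 (p0.1, headK p0.2)
          (Finset.mem_image.2 ⟨p0, Finset.mem_filter.2 ⟨hp0, rfl⟩, rfl⟩)
        simp only at h6
        rw [glue_head_tail] at h6
        exact h6
      · -- spanning
        rw [eq_top_iff, ← span_polyExt (fam n) ih.2]
        refine Submodule.span_le.2 ?_
        rintro w ⟨⟨⟨a, k'⟩, m⟩, rfl⟩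
        show rho n (fam n (a, k')) * (X 0 : A (n+1)) ^ m ∈ _
        have heq : rho n (fam n (a, k')) * (X 0 : A (n+1)) ^ m =
            (rho n (E n a) * (X 0 : A (n+1)) ^ m) * rho n (Xp n k'.1) := by
          show rho n (E n a * Xp n k'.1) * _ = _
          rw [map_mul]
          ring
        rw [heq]
        have h1 := EX'_mem_spanS1 n a m
        have h2 := mul_mem_span_image _ (rho n (Xp n k'.1)) _ h1
        refine Submodule.span_le.2 ?_ h2
        rintro w ⟨v, ⟨⟨b, j⟩, rfl⟩, rfl⟩
        apply Submodule.subset_span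
        refine ⟨(b, glueK j k'), ?_⟩
        rw [fam_glue]

section Final

variable (n : ℕ)

def Iq : Ideal (A n) :=
  Ideal.span (Set.range fun k : Fin n => MvPolynomial.esymm (Fin n) ℤ ((k : ℕ) + 1))

def B0 : Module.Basis ((Fin n → ℕ) × Kp n) ℤ (A n) :=
  Module.Basis.mk (main n).1 (main n).2.ge

lemma B0_apply (p : (Fin n → ℕ) × Kp n) : B0 n p = fam n p := Module.Basis.mk_apply _ _ p

lemma E_mem_Iq {b : Fin n → ℕ} (hb : b ≠ 0) : E n b ∈ Iq n := by
  classical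
  have hex : ∃ i0 : Fin n, b i0 ≠ 0 := by
    by_contra h
    push_neg at h
    exact hb (funext fun i => h i)
  obtain ⟨i0, hi0⟩ := hex
  have hsplit : E n b = esymm (Fin n) ℤ ((i0 : ℕ) + 1) *
      (esymm (Fin n) ℤ ((i0 : ℕ) + 1) ^ (b i0 - 1) *
        ∏ i ∈ Finset.univ.erase i0, esymm (Fin n) ℤ ((i : ℕ) + 1) ^ b i) := by
    rw [E, ← Finset.mul_prod_erase Finset.univ _ (Finset.mem_univ i0), ← mul_assoc]
    congr 1
    rw [← pow_succ']
    congr 1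
    omega
  rw [hsplit]
  exact Ideal.mul_mem_right _ _ (Ideal.subset_span ⟨i0, rfl⟩)

lemma quotient_span_top :
    Submodule.span ℤ (Set.range fun k : Kp n => Ideal.Quotient.mk (Iq n) (Xp n k.1)) = ⊤ := by
  rw [eq_top_iff]
  intro q _
  obtain ⟨p, rfl⟩ := Ideal.Quotient.mk_surjective q
  have hp : p ∈ Submodule.span ℤ (Set.range (fam n)) := by rw [(main n).2]; trivial
  have hmap : Ideal.Quotient.mk (Iq n) p ∈ Submodule.map
      ((Ideal.Quotient.mkₐ ℤ (Iq n)).toLinearMap) (Submodule.span ℤ (Set.range (fam n))) :=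
    ⟨p, hp, rfl⟩
  rw [Submodule.map_span] at hmap
  refine Submodule.span_le.2 ?_ hmap
  rintro w ⟨v, ⟨⟨b, k⟩, rfl⟩, rfl⟩
  by_cases hb : b = (0 : Fin n → ℕ)
  · have : (Ideal.Quotient.mkₐ ℤ (Iq n)).toLinearMap (fam n (b, k)) =
        Ideal.Quotient.mk (Iq n) (Xp n k.1) := by
      subst hb
      show Ideal.Quotient.mk (Iq n) (E n 0 * Xp n k.1) = _
      rw [E_zero, one_mul]
    rw [this]
    exact Submodule.subset_span ⟨k, rfl⟩
  · have : (Ideal.Quotient.mkₐ ℤ (Iq n)).toLinearMap (fam n (b, k)) = 0 := by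
      show Ideal.Quotient.mk (Iq n) (E n b * Xp n k.1) = 0
      rw [Ideal.Quotient.eq_zero_iff_mem]
      exact Ideal.mul_mem_right _ _ (E_mem_Iq n hb)
    rw [this]
    exact Submodule.zero_mem _

lemma quotient_li :
    LinearIndependent ℤ (fun k : Kp n => Ideal.Quotient.mk (Iq n) (Xp n k.1)) := by
  classical
  rw [Fintype.linearIndependent_iff]
  intro g hsum k0
  set P : A n := ∑ k : Kp n, g k • Xp n k.1 with hP
  have hPI : P ∈ Iq n := by
    rw [← Ideal.Quotient.eq_zero_iff_mem]
    rw [hP, map_sum, ← hsum]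
    exact Finset.sum_congr rfl fun k _ => by rw [map_zsmul]
  -- P lies in the span of basis elements with nonzero E-part
  have hPmem : P ∈ Submodule.span ℤ (B0 n '' {p | p.1 ≠ 0}) := by
    rw [Iq, Ideal.mem_span_range_iff_exists_fun] at hPI
    obtain ⟨c, hc⟩ := hPI
    rw [← hc]
    refine Submodule.sum_mem _ fun i _ => ?_
    have hci : c i ∈ Submodule.span ℤ (Set.range (fam n)) := by rw [(main n).2]; trivial
    have h2 := mul_mem_span_image _ (esymm (Fin n) ℤ ((i : ℕ) + 1)) _ hci
    refine Submodule.span_le.2 ?_ h2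
    rintro w ⟨v, ⟨⟨b, k⟩, rfl⟩, rfl⟩
    apply Submodule.subset_span
    refine ⟨(b + Pi.single i 1, k), ?_, ?_⟩
    · show ¬((b + Pi.single i 1, k) : (Fin n → ℕ) × Kp n).1 = 0
      intro h
      have h' := congrFun h i
      simp at h'
    · rw [B0_apply]
      show E n (b + Pi.single i 1) * Xp n k.1 = E n b * Xp n k.1 * esymm (Fin n) ℤ ((i:ℕ)+1)
      rw [← esymm_mul_E]
      ring
  -- compute the (0, k0)-coordinate of P in the basis
  have hrepr : (B0 n).repr P = ∑ k : Kp n, g k • Finsupp.single ((0 : Fin n → ℕ), k) (1 : ℤ) := by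
    rw [hP, map_sum]
    refine Finset.sum_congr rfl fun k _ => ?_
    rw [map_smul]
    congr 1
    have : Xp n k.1 = B0 n (0, k) := by
      rw [B0_apply]
      show Xp n k.1 = E n 0 * Xp n k.1
      rw [E_zero, one_mul]
    rw [this, Module.Basis.repr_self]
  have hcoord : ((B0 n).repr P) ((0 : Fin n → ℕ), k0) = g k0 := by
    rw [hrepr, Finsupp.finset_sum_apply]
    rw [Finset.sum_eq_single k0]
    · simp
    · intro k _ hk
      rw [Finsupp.smul_apply, Finsupp.single_apply,
        if_neg (by simp [hk]), smul_zero]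
    · intro h; exact absurd (Finset.mem_univ k0) h
  have hsupp := (B0 n).repr_support_subset_of_mem_span _ hPmem
  by_contra hg
  have hmem : ((0 : Fin n → ℕ), k0) ∈ ((B0 n).repr P).support :=
    Finsupp.mem_support_iff.2 (by rw [hcoord]; exact hg)
  have := hsupp hmem
  simp only [Set.mem_setOf_eq] at this
  exact this rfl

end Final

end CoinvAux

theorem coinvariant_monomial_basis (n : ℕ) :
    ∃ b : Module.Basis {k : Fin n → ℕ // ∀ i : Fin n, k i ≤ n - 1 - (i : ℕ)} ℤ
      (MvPolynomial (Fin n) ℤ ⧸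
        Ideal.span (Set.range fun k : Fin n => MvPolynomial.esymm (Fin n) ℤ ((k : ℕ) + 1))),
      ∀ kk, b kk =
        Ideal.Quotient.mk
          (Ideal.span (Set.range fun k : Fin n => MvPolynomial.esymm (Fin n) ℤ ((k : ℕ) + 1)))
          (∏ i : Fin n, X i ^ (kk.1 i)) := by
  refine ⟨Module.Basis.mk (CoinvAux.quotient_li n) (CoinvAux.quotient_span_top n).ge, fun kk => ?_⟩
  refine (Module.Basis.mk_apply _ _ kk).trans ?_
  rfl
end
end
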